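/- arXiv:1804.05035 — 4 statements merged into one kernel-verified Lean document; each statement's English description precedes it below -/
import Mathlib

section
/- Every ab-set on the real line is a regular system: if X ⊂ ℝ is a discrete set in which the distances between consecutive points alternate between two fixed positive values a and b, then the group of isometries of ℝ mapping X to itself acts transitively on X. -/
noncomputable section
open scoped Pointwise

/-- Euclidean d-space. -/
abbrev Euc (d : ℕ) : Type := EuclideanSpace ℝ (Fin d)

/-- The 1-based standard basis vector `e_k` of `ℝ^d` (for `1 ≤ k ≤ d`). -/
def eVec (d k : ℕ) : Euc d :=
  if h : k - 1 < d then EuclideanSpace.single ⟨k - 1, h⟩ (1 : ℝ) else 0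

/-- Conditions (A1)–(A3) on the doubly-infinite integer sequence `A`. -/
def EngelSeq (d : ℕ) (A : ℤ → ℤ) : Prop :=
  (∀ i : ℤ, 1 ≤ (A i).natAbs ∧ (A i).natAbs ≤ d - 1) ∧
  (∀ i : ℤ, (A (i + (d - 1))).natAbs = (A i).natAbs) ∧
  (∀ s : ℕ, 1 ≤ s → s ≤ d - 1 → ∃ i : ℤ, 1 ≤ i ∧ i ≤ d - 1 ∧ (A i).natAbs = s)

/-- The vector `u_i = sign(a_i) e_{|a_i|}`. -/
def engelU (d : ℕ) (A : ℤ → ℤ) (i : ℤ) : Euc d :=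
  (if 0 < A i then (1 : ℝ) else -1) • eVec d (A i).natAbs

/-- The cumulative sum `u_1 + ⋯ + u_i` (with the natural convention for `i ≤ 0`,
so that `engelCum 0 = 0` and `engelCum i - engelCum (i-1) = u_i` for all `i`). -/
def engelCum (d : ℕ) (A : ℤ → ℤ) (i : ℤ) : Euc d :=
  if 0 ≤ i then ∑ j ∈ Finset.range i.toNat, engelU d A ((j : ℤ) + 1)
  else -∑ j ∈ Finset.range (-i).toNat, engelU d A (-(j : ℤ))

/-- The translation vector placing layer `m` of an Engel set:
layer `m` lies at height `2bm`, and the horizontal shifts `δ·u_i` accumulate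
according to (E3), (E4). (Integer division is floor division.) -/
def engelOffset (d : ℕ) (A : ℤ → ℤ) (b δ : ℝ) (m : ℤ) : Euc d :=
  ((2 * b) * (m : ℝ)) • eVec d d + δ • engelCum d A (m / 2)

/-- The horizontal grid `Y = 2aℤ^{d-1} × {0}` in `ℝ^d`. -/
def engelGrid (d : ℕ) (a : ℝ) : Set (Euc d) :=
  {x | ∀ j : Fin d, ((j : ℕ) < d - 1 → ∃ m : ℤ, x j = 2 * a * (m : ℝ)) ∧
        ((j : ℕ) = d - 1 → x j = 0)}

/-- Layer `X_m` of the Engel set `X(A,a,b,δ)`. -/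
def engelLayer (d : ℕ) (A : ℤ → ℤ) (a b δ : ℝ) (m : ℤ) : Set (Euc d) :=
  engelOffset d A b δ m +ᵥ engelGrid d a

/-- The Engel set `X(A,a,b,δ) = ⋃_m X_m`. -/
def engelSet (d : ℕ) (A : ℤ → ℤ) (a b δ : ℝ) : Set (Euc d) :=
  ⋃ m : ℤ, engelLayer d A a b δ m

/-- A Delone set of type `(r,R)`: every open `r`-ball contains at most one point of `X`,
and every closed `R`-ball contains at least one point of `X`. -/
def IsDeloneSet {V : Type*} [MetricSpace V] (X : Set V) (r R : ℝ) : Prop :=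
  (∀ y : V, (X ∩ Metric.ball y r).Subsingleton) ∧
  (∀ y : V, (X ∩ Metric.closedBall y R).Nonempty)

/-- The ρ-cluster of `X` at `x`. -/
def cluster {V : Type*} [MetricSpace V] (X : Set V) (x : V) (ρ : ℝ) : Set V :=
  X ∩ Metric.closedBall x ρ

/-- Equivalence of the ρ-clusters of `X` at `x` and `x'`: an isometry of the ambient
space carries the one cluster onto the other, mapping center to center. -/
def ClustersEquiv {V : Type*} [MetricSpace V] (X : Set V) (x x' : V) (ρ : ℝ) : Prop :=
  ∃ g : V ≃ᵢ V, g x = x' ∧ g '' cluster X x ρ = cluster X x' ρ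

/-- A regular system: the symmetry group of `X` acts transitively on `X`. -/
def IsRegularSystem {V : Type*} [MetricSpace V] (X : Set V) : Prop :=
  ∀ x ∈ X, ∀ y ∈ X, ∃ g : V ≃ᵢ V, g '' X = X ∧ g x = y

/-- An `ab`-set on the line: the points can be enumerated in increasing order so that
consecutive gaps alternately equal `a` and `b`. -/
def IsABSet (X : Set ℝ) (a b : ℝ) : Prop :=
  ∃ f : ℤ → ℝ, StrictMono f ∧ Set.range f = X ∧
    (∀ i : ℤ, f (2 * i + 1) - f (2 * i) = a) ∧
    (∀ i : ℤ, f (2 * i + 2) - f (2 * i + 1) = b)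


/-- Translation isometry of `ℝ`. -/
def transIso (c : ℝ) : ℝ ≃ᵢ ℝ :=
  ⟨⟨fun x => x + c, fun x => x - c, fun x => by ring, fun x => by ring⟩,
    Isometry.of_dist_eq fun x y => by simp [Real.dist_eq]⟩

/-- Reflection isometry of `ℝ`. -/
def reflIso (c : ℝ) : ℝ ≃ᵢ ℝ :=
  ⟨⟨fun x => c - x, fun x => c - x, fun x => by ring, fun x => by ring⟩,
    Isometry.of_dist_eq fun x y => by
      rw [Real.dist_eq, Real.dist_eq, show c - x - (c - y) = -(x - y) by ring, abs_neg]⟩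

@[simp] lemma transIso_apply (c x : ℝ) : transIso c x = x + c := rfl

@[simp] lemma reflIso_apply (c x : ℝ) : reflIso c x = c - x := rfl

lemma ab_step2 {a b : ℝ} {f : ℤ → ℝ}
    (hfa : ∀ i : ℤ, f (2 * i + 1) - f (2 * i) = a)
    (hfb : ∀ i : ℤ, f (2 * i + 2) - f (2 * i + 1) = b) :
    ∀ i : ℤ, f (i + 2) = f i + (a + b) := by
  intro i
  rcases Int.even_or_odd i with ⟨k, hk⟩ | ⟨k, hk⟩
  · have h1 := hfa k
    have h2 := hfb k
    have e1 : i = 2 * k := by omega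
    subst e1
    linarith
  · have h1 := hfa (k + 1)
    have h2 := hfb k
    simp only [show (2:ℤ) * (k + 1) + 1 = 2 * k + 3 by ring,
      show (2:ℤ) * (k + 1) = 2 * k + 2 by ring,
      show (2:ℤ) * k + 2 + 1 = 2 * k + 3 by ring] at h1
    have e1 : i = 2 * k + 1 := by omega
    subst e1
    have e2 : (2:ℤ) * k + 1 + 2 = 2 * k + 3 := by ring
    rw [e2]
    linarith

lemma ab_shift {a b : ℝ} {f : ℤ → ℝ}
    (hfa : ∀ i : ℤ, f (2 * i + 1) - f (2 * i) = a)
    (hfb : ∀ i : ℤ, f (2 * i + 2) - f (2 * i + 1) = b) :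
    ∀ k i : ℤ, f (i + 2 * k) = f i + k * (a + b) := by
  have h2 := ab_step2 hfa hfb
  intro k
  induction k using Int.induction_on with
  | zero => simp
  | succ n ih =>
      intro i
      have := h2 (i + 2 * n)
      have e : i + 2 * ((n : ℤ) + 1) = i + 2 * n + 2 := by ring
      rw [e, this, ih i]
      push_cast
      ring
  | pred n ih =>
      intro i
      have := h2 (i + 2 * (-(n : ℤ) - 1))
      have e : i + 2 * (-(n : ℤ) - 1) + 2 = i + 2 * (-(n : ℤ)) := by ring
      rw [e] at this
      have := ih i
      rw [show i + 2 * (-(n:ℤ)-1) = i + 2 * (-(n:ℤ)) - 2 by ring] at *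
      push_cast at *
      linarith [h2 (i + 2 * (-(n:ℤ)) - 2), ih i]

lemma ab_refl {a b : ℝ} {f : ℤ → ℝ}
    (hfa : ∀ i : ℤ, f (2 * i + 1) - f (2 * i) = a)
    (hfb : ∀ i : ℤ, f (2 * i + 2) - f (2 * i + 1) = b) :
    ∀ i : ℤ, f i + f (1 - i) = f 0 + f 1 := by
  have hs := ab_shift hfa hfb
  intro i
  rcases Int.even_or_odd i with ⟨k, hk⟩ | ⟨k, hk⟩
  · have e1 : i = 0 + 2 * k := by omega
    have e2 : 1 - i = 1 + 2 * (-k) := by omega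
    rw [e2, e1, hs k 0, hs (-k) 1]
    push_cast; ring
  · have e1 : i = 1 + 2 * k := by omega
    have e2 : 1 - i = 0 + 2 * (-k) := by omega
    rw [e2, e1, hs k 1, hs (-k) 0]
    push_cast; ring

/-- every `ab`-set on the real line is a regular system. -/
theorem abSet_isRegularSystem (a b : ℝ) (ha : 0 < a) (hab : a ≤ b)
    (X : Set ℝ) (hX : IsABSet X a b) : IsRegularSystem X := by
  obtain ⟨f, hmono, hrange, hfa, hfb⟩ := hX
  have hs := ab_shift hfa hfb
  have hr := ab_refl hfa hfb
  intro x hx y hy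
  rw [← hrange] at hx hy
  obtain ⟨m, rfl⟩ := hx
  obtain ⟨n, rfl⟩ := hy
  rcases Int.even_or_odd (n - m) with ⟨k, hk⟩ | ⟨k, hk⟩
  · -- translation by k * (a + b)
    refine ⟨transIso (k * (a + b)), ?_, ?_⟩
    · rw [← hrange]
      ext z
      simp only [Set.mem_image, Set.mem_range, transIso_apply]
      constructor
      · rintro ⟨_, ⟨i, rfl⟩, rfl⟩
        exact ⟨i + 2 * k, hs k i⟩
      · rintro ⟨i, rfl⟩
        refine ⟨f (i + 2 * (-k)), ⟨_, rfl⟩, ?_⟩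
        show f (i + 2 * (-k)) + k * (a + b) = f i
        rw [hs (-k) i]; push_cast; ring
    · show f m + k * (a + b) = f n
      rw [← hs k m, show m + 2 * k = n by omega]
  · -- reflection about (f n + f m) / 2
    have hc : ∀ i : ℤ, f n + f m - f i = f (1 - i + (n + m - 1)) := by
      intro i
      have h1 := hr i
      have h2 := hr n
      obtain ⟨p, hp⟩ : ∃ p : ℤ, m - (1 - n) = 2 * p := ⟨n - k - 1, by omega⟩
      have h3 : f m = f (1 - n) + p * (a + b) := by
        rw [← hs p (1 - n), show 1 - n + 2 * p = m by omega]
      have h4 : f (1 - i + (n + m - 1)) = f (1 - i) + p * (a + b) := by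
        rw [← hs p (1 - i), show 1 - i + 2 * p = 1 - i + (n + m - 1) by omega]
      linarith
    refine ⟨reflIso (f n + f m), ?_, ?_⟩
    · rw [← hrange]
      ext z
      simp only [Set.mem_image, Set.mem_range, reflIso_apply]
      constructor
      · rintro ⟨_, ⟨i, rfl⟩, rfl⟩
        exact ⟨1 - i + (n + m - 1), (hc i).symm⟩
      · rintro ⟨i, rfl⟩
        refine ⟨f (1 - i + (n + m - 1)), ⟨_, rfl⟩, ?_⟩
        show f n + f m - f (1 - i + (n + m - 1)) = f i
        rw [hc (1 - i + (n + m - 1)), show 1 - (1 - i + (n + m - 1)) + (n + m - 1) = i by omega]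
    · show f n + f m - f m = f n
      ring
end
end

section
/- For dimension 1 and any ρ with 0 < ρ < 2R, there exists a Delone set X ⊂ ℝ of type (r,R) for some r ≤ ρ/2 whose ρ-clusters are all mutually equivalent but which is not a regular system. Consequently ρ̂₁ = 2R. -/
noncomputable section
open scoped Pointwise

def rrTrans (c : ℝ) : ℝ ≃ᵢ ℝ :=
  ⟨⟨fun t => t + c, fun t => t - c, fun t => by ring, fun t => by ring⟩,
    Isometry.of_dist_eq (fun a b => by simp only [Real.dist_eq]; ring_nf)⟩

def rrRefl (c : ℝ) : ℝ ≃ᵢ ℝ :=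
  ⟨⟨fun t => c - t, fun t => c - t, fun t => by ring, fun t => by ring⟩,
    Isometry.of_dist_eq (fun a b => by
      simp only [Real.dist_eq]
      rw [show c - a - (c - b) = -(a - b) by ring, abs_neg])⟩

@[simp] lemma rrTrans_apply (c t : ℝ) : rrTrans c t = t + c := rfl
@[simp] lemma rrRefl_apply (c t : ℝ) : rrRefl c t = c - t := rfl

lemma real_isometry_form (e : ℝ ≃ᵢ ℝ) :
    (∀ t : ℝ, e t = t + e 0) ∨ (∀ t : ℝ, e t = e 0 - t) := by
  have hd : ∀ s t : ℝ, |e s - e t| = |s - t| := by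
    intro s t; have := e.dist_eq s t; simpa [Real.dist_eq] using this
  have h0 : ∀ t : ℝ, e t - e 0 = t ∨ e t - e 0 = -t := by
    intro t
    have h := hd t 0
    rw [sub_zero] at h
    exact abs_eq_abs.mp h
  rcases h0 1 with h1 | h1
  · left
    intro t
    rcases h0 t with h | h
    · linarith
    · have h2 := hd t 1
      rcases abs_eq_abs.mp h2 with h3 | h3 <;> linarith
  · right
    intro t
    rcases h0 t with h | h
    · have h2 := hd t 1
      rcases abs_eq_abs.mp h2 with h3 | h3 <;> linarith
    · linarith

def zsum (f : ℤ → ℝ) (k : ℤ) : ℝ :=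
  if 0 ≤ k then ∑ j ∈ Finset.range k.toNat, f j
  else -∑ j ∈ Finset.range (-k).toNat, f (-(j : ℤ) - 1)

lemma zsum_step (f : ℤ → ℝ) (k : ℤ) : zsum f (k + 1) = zsum f k + f k := by
  rcases le_or_gt 0 k with hk | hk
  · rw [zsum, zsum, if_pos (by omega : (0:ℤ) ≤ k + 1), if_pos hk]
    rw [show (k+1).toNat = k.toNat + 1 by omega, Finset.sum_range_succ]
    congr 2
    omega
  · rcases eq_or_lt_of_le (by omega : k + 1 ≤ 0) with h0 | h0
    · have hk0 : k = -1 := by omega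
      subst hk0; rw [zsum, zsum]; norm_num
    · rw [zsum, zsum, if_neg (by omega), if_neg (by omega)]
      rw [show (-k).toNat = (-(k+1)).toNat + 1 by omega, Finset.sum_range_succ,
        show -((-(k+1)).toNat : ℤ) - 1 = k by omega]
      ring

def dGap (R ρ : ℝ) (n : ℤ) : ℝ :=
  if Even n then ρ else ρ + (2*R - ρ) * (1/2 + Real.arctan n / Real.pi)

def dPt (R ρ : ℝ) : ℤ → ℝ := zsum (dGap R ρ)

section bounds
variable {R ρ : ℝ} (hρ : 0 < ρ) (hρR : ρ < 2*R)

lemma arctan_frac_mem (n : ℤ) : 0 < 1/2 + Real.arctan n / Real.pi ∧ 1/2 + Real.arctan n / Real.pi < 1 := by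
  have hπ : 0 < Real.pi := Real.pi_pos
  have h1 : Real.arctan n < Real.pi / 2 := Real.arctan_lt_pi_div_two n
  have h2 : -(Real.pi/2) < Real.arctan n := Real.neg_pi_div_two_lt_arctan n
  constructor
  · have : -(1/2 : ℝ) < Real.arctan n / Real.pi := by
      rw [lt_div_iff₀ hπ]; linarith
    linarith
  · have : Real.arctan n / Real.pi < 1/2 := by
      rw [div_lt_iff₀ hπ]; linarith
    linarith

include hρR in
lemma dGap_lb (n : ℤ) : ρ ≤ dGap R ρ n := by
  rw [dGap]
  split
  · exact le_refl _
  · nlinarith [(arctan_frac_mem n).1]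

include hρR in
lemma dGap_odd_lb {n : ℤ} (h : ¬ Even n) : ρ < dGap R ρ n := by
  rw [dGap, if_neg h]
  nlinarith [(arctan_frac_mem n).1]

include hρR in
lemma dGap_ub (n : ℤ) : dGap R ρ n ≤ 2*R := by
  rw [dGap]
  split
  · linarith
  · nlinarith [(arctan_frac_mem n).2]

include hρR in
lemma dGap_inj {m n : ℤ} (hm : ¬ Even m) (hn : ¬ Even n) (h : dGap R ρ m = dGap R ρ n) : m = n := by
  rw [dGap, dGap, if_neg hm, if_neg hn] at h
  have hπ : 0 < Real.pi := Real.pi_pos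
  have h2 : Real.arctan m = Real.arctan n := by
    have h3 : Real.arctan m / Real.pi = Real.arctan n / Real.pi := by nlinarith
    field_simp at h3
    exact h3
  have := Real.arctan_injective h2
  exact_mod_cast this

lemma dPt_step (k : ℤ) : dPt R ρ (k+1) = dPt R ρ k + dGap R ρ k := zsum_step _ _

include hρR in
lemma dPt_mono {m : ℤ} : ∀ n : ℤ, m ≤ n → dPt R ρ m + ρ * ((n : ℝ) - m) ≤ dPt R ρ n := by
  refine Int.le_induction ?_ ?_
  · simp
  · intro n hmn ih
    have h1 := dPt_step (R := R) (ρ := ρ) n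
    have h2 := dGap_lb hρR (R := R) (ρ := ρ) n
    push_cast
    push_cast at ih
    linarith

include hρ hρR in
lemma dPt_lt {m n : ℤ} (h : m < n) : dPt R ρ m < dPt R ρ n := by
  have := dPt_mono hρR (R := R) (ρ := ρ) n (le_of_lt h)
  have h1 : (1:ℝ) ≤ (n:ℝ) - m := by
    have h2 : m + 1 ≤ n := h
    have : ((m:ℝ) + 1) ≤ (n:ℝ) := by exact_mod_cast h2
    linarith
  nlinarith
end bounds

section part1aux
variable {R ρ : ℝ} (hρ : 0 < ρ) (hρR : ρ < 2*R)

include hρ hρR in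
lemma dPt_le {m n : ℤ} (h : m ≤ n) : dPt R ρ m ≤ dPt R ρ n := by
  rcases eq_or_lt_of_le h with h | h
  · subst h; exact le_refl _
  · exact le_of_lt (dPt_lt hρ hρR h)

include hρ hρR in
lemma dPt_lt_iff {m n : ℤ} : dPt R ρ m < dPt R ρ n ↔ m < n := by
  constructor
  · intro h
    by_contra hc
    push_neg at hc
    exact absurd h (not_lt.mpr (dPt_le hρ hρR hc))
  · exact dPt_lt hρ hρR

include hρ hρR in
lemma cluster_even {n : ℤ} (hn : Even n) :
    cluster (Set.range (dPt R ρ)) (dPt R ρ n) ρ = {dPt R ρ n, dPt R ρ (n+1)} := by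
  have hodd : ¬ Even (n - 1) := by rw [Int.even_iff] at hn ⊢; omega
  have hodd2 : ¬ Even (n + 1) := by rw [Int.even_iff] at hn ⊢; omega
  ext z
  constructor
  · rintro ⟨⟨m, rfl⟩, hball⟩
    rw [Metric.mem_closedBall, Real.dist_eq] at hball
    have hmn : m = n ∨ m = n + 1 := by
      by_contra hc
      push_neg at hc
      rcases lt_or_ge m n with hlt | hge
      · have h1 : m ≤ n - 1 := by omega
        have h2 : dPt R ρ m ≤ dPt R ρ (n-1) := dPt_le hρ hρR h1
        have h3 : dPt R ρ ((n-1)+1) = dPt R ρ (n-1) + dGap R ρ (n-1) := dPt_step _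
        have h4 : ρ < dGap R ρ (n-1) := dGap_odd_lb hρR hodd
        have h5 : (n-1)+1 = n := by ring
        rw [h5] at h3
        rw [abs_le] at hball
        linarith [hball.1]
      · have h1 : n + 2 ≤ m := by omega
        have h2 : dPt R ρ (n+2) ≤ dPt R ρ m := dPt_le hρ hρR h1
        have h3 : dPt R ρ (n+1) = dPt R ρ n + dGap R ρ n := dPt_step _
        have h4 : dPt R ρ (n+1+1) = dPt R ρ (n+1) + dGap R ρ (n+1) := dPt_step _
        have h5 : ρ < dGap R ρ (n+1) := dGap_odd_lb hρR hodd2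
        have h6 : ρ ≤ dGap R ρ n := dGap_lb hρR n
        have h7 : n+1+1 = n+2 := by ring
        rw [h7] at h4
        rw [abs_le] at hball
        linarith [hball.2]
    rcases hmn with rfl | rfl
    · exact Set.mem_insert _ _
    · exact Set.mem_insert_of_mem _ rfl
  · intro hz
    rcases hz with rfl | hz
    · exact ⟨⟨n, rfl⟩, by simp [Metric.mem_closedBall, le_of_lt hρ]⟩
    · rcases hz with rfl
      refine ⟨⟨n+1, rfl⟩, ?_⟩
      rw [Metric.mem_closedBall, Real.dist_eq]
      have h3 : dPt R ρ (n+1) = dPt R ρ n + dGap R ρ n := dPt_step _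
      have h4 : dGap R ρ n = ρ := if_pos hn
      rw [h3, h4]
      simp [abs_of_nonneg (le_of_lt hρ)]

include hρ hρR in
lemma cluster_odd {n : ℤ} (hn : ¬ Even n) :
    cluster (Set.range (dPt R ρ)) (dPt R ρ n) ρ = {dPt R ρ (n-1), dPt R ρ n} := by
  have heven : Even (n - 1) := by rw [Int.even_iff] at hn ⊢; omega
  have hodd2 : ¬ Even (n - 2) := by rw [Int.even_iff] at hn ⊢; omega
  ext z
  constructor
  · rintro ⟨⟨m, rfl⟩, hball⟩
    rw [Metric.mem_closedBall, Real.dist_eq] at hball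
    have hmn : m = n - 1 ∨ m = n := by
      by_contra hc
      push_neg at hc
      rcases lt_or_ge m n with hlt | hge
      · have h1 : m ≤ n - 2 := by omega
        have h2 : dPt R ρ m ≤ dPt R ρ (n-2) := dPt_le hρ hρR h1
        have h3 : dPt R ρ ((n-2)+1) = dPt R ρ (n-2) + dGap R ρ (n-2) := dPt_step _
        have h4 : dPt R ρ ((n-1)+1) = dPt R ρ (n-1) + dGap R ρ (n-1) := dPt_step _
        have h5 : ρ < dGap R ρ (n-2) := dGap_odd_lb hρR hodd2
        have h6 : ρ ≤ dGap R ρ (n-1) := dGap_lb hρR _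
        have e1 : (n-2)+1 = n - 1 := by ring
        have e2 : (n-1)+1 = n := by ring
        rw [e1] at h3; rw [e2] at h4
        rw [abs_le] at hball
        linarith [hball.1]
      · have h1 : n + 1 ≤ m := by omega
        have h2 : dPt R ρ (n+1) ≤ dPt R ρ m := dPt_le hρ hρR h1
        have h3 : dPt R ρ (n+1) = dPt R ρ n + dGap R ρ n := dPt_step _
        have h5 : ρ < dGap R ρ n := dGap_odd_lb hρR hn
        rw [abs_le] at hball
        linarith [hball.2]
    rcases hmn with rfl | rfl
    · exact Set.mem_insert _ _
    · exact Set.mem_insert_of_mem _ rfl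
  · intro hz
    rcases hz with rfl | hz
    · refine ⟨⟨n-1, rfl⟩, ?_⟩
      rw [Metric.mem_closedBall, Real.dist_eq]
      have h3 : dPt R ρ ((n-1)+1) = dPt R ρ (n-1) + dGap R ρ (n-1) := dPt_step _
      have h4 : dGap R ρ (n-1) = ρ := if_pos heven
      have e2 : (n-1)+1 = n := by ring
      rw [e2] at h3
      rw [h3, h4]
      simp [abs_of_nonpos, le_of_lt hρ]
    · rcases hz with rfl
      exact ⟨⟨n, rfl⟩, by simp [Metric.mem_closedBall, le_of_lt hρ]⟩

end part1aux

lemma part1 (R ρ : ℝ) (hR : 0 < R) (hρ : 0 < ρ) (hρR : ρ < 2 * R) :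
    ∃ r : ℝ, ∃ X : Set ℝ, 0 < r ∧ r ≤ ρ / 2 ∧ r < R ∧ IsDeloneSet X r R ∧
      (∀ x ∈ X, ∀ x' ∈ X, ClustersEquiv X x x' ρ) ∧ ¬ IsRegularSystem X := by
  refine ⟨ρ/2, Set.range (dPt R ρ), by linarith, le_refl _, by linarith, ⟨?_, ?_⟩, ?_, ?_⟩
  · -- packing
    intro y u hu v hv
    obtain ⟨⟨m, rfl⟩, hub⟩ := hu
    obtain ⟨⟨n, rfl⟩, hvb⟩ := hv
    rw [Metric.mem_ball, Real.dist_eq] at hub hvb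
    have key : ∀ a b : ℤ, a < b → |dPt R ρ a - y| < ρ/2 → |dPt R ρ b - y| < ρ/2 → False := by
      intro a b hab h1 h2
      have hm := dPt_mono hρR (m := a) b hab.le
      have hab1 : a + 1 ≤ b := hab
      have h1' : (1:ℝ) ≤ (b:ℝ) - a := by
        have : ((a:ℝ) + 1) ≤ (b:ℝ) := by exact_mod_cast hab1
        linarith
      rw [abs_lt] at h1 h2
      nlinarith [h1.1, h1.2, h2.1, h2.2]
    rcases lt_trichotomy m n with h | h | h
    · exact absurd (key m n h hub hvb) (fun a => a)
    · rw [h]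
    · exact absurd (key n m h hvb hub) (fun a => a)
  · -- covering
    intro y
    have hbdd : ∃ b : ℤ, ∀ z : ℤ, dPt R ρ z ≤ y → z ≤ b := by
      refine ⟨max 0 ⌈(y - dPt R ρ 0)/ρ⌉, ?_⟩
      intro z hz
      rcases le_or_gt z 0 with h0 | h0
      · exact le_trans h0 (le_max_left _ _)
      · have hm := dPt_mono hρR (m := 0) z h0.le
        push_cast at hm
        have hcomm : ρ * ((z:ℝ) - 0) = (z:ℝ) * ρ := by ring
        have hz2 : (z:ℝ) ≤ (y - dPt R ρ 0)/ρ := by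
          rw [le_div_iff₀ hρ]
          linarith
        have hz3 : (z:ℝ) ≤ (⌈(y - dPt R ρ 0)/ρ⌉ : ℝ) := le_trans hz2 (Int.le_ceil _)
        have hz4 : z ≤ ⌈(y - dPt R ρ 0)/ρ⌉ := by exact_mod_cast hz3
        exact le_trans hz4 (le_max_right _ _)
    have hinh : ∃ z : ℤ, dPt R ρ z ≤ y := by
      refine ⟨min 0 ⌊(y - dPt R ρ 0)/ρ⌋, ?_⟩
      set z := min 0 ⌊(y - dPt R ρ 0)/ρ⌋ with hzdef
      have hz0 : z ≤ 0 := min_le_left _ _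
      have hm := dPt_mono hρR (m := z) 0 hz0
      have hzr : (z:ℝ) ≤ (y - dPt R ρ 0)/ρ := by
        have h1 : z ≤ ⌊(y - dPt R ρ 0)/ρ⌋ := min_le_right _ _
        have h2 : ((z:ℝ)) ≤ ((⌊(y - dPt R ρ 0)/ρ⌋ : ℤ) : ℝ) := by exact_mod_cast h1
        exact le_trans h2 (Int.floor_le _)
      have hzr2 : (z:ℝ) * ρ ≤ y - dPt R ρ 0 := by
        rw [← le_div_iff₀ hρ]
        exact hzr
      have hcomm : ρ * ((0:ℝ) - (z:ℝ)) = -((z:ℝ) * ρ) := by ring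
      push_cast at hm
      linarith
    obtain ⟨k, hk, hkmax⟩ := Int.exists_greatest_of_bdd hbdd hinh
    have hk1 : y < dPt R ρ (k+1) := by
      by_contra hc
      push_neg at hc
      have := hkmax (k+1) hc
      omega
    have hstep := dPt_step (R := R) (ρ := ρ) k
    have hub := dGap_ub hρR (R := R) (ρ := ρ) k
    rcases le_or_gt (y - dPt R ρ k) R with h | h
    · refine ⟨dPt R ρ k, ⟨k, rfl⟩, ?_⟩
      rw [Metric.mem_closedBall, Real.dist_eq, abs_of_nonpos (by linarith)]
      linarith
    · refine ⟨dPt R ρ (k+1), ⟨k+1, rfl⟩, ?_⟩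
      rw [Metric.mem_closedBall, Real.dist_eq, abs_of_nonneg (by linarith)]
      linarith
  · -- clusters equivalent
    rintro x ⟨n, rfl⟩ x' ⟨m, rfl⟩
    have hstep_n : dPt R ρ (n+1) = dPt R ρ n + dGap R ρ n := dPt_step _
    have hstep_m : dPt R ρ (m+1) = dPt R ρ m + dGap R ρ m := dPt_step _
    rcases Int.even_or_odd n with hn | hn <;> rcases Int.even_or_odd m with hm | hm
    · -- even, even : translation
      refine ⟨rrTrans (dPt R ρ m - dPt R ρ n), by rw [rrTrans_apply]; ring, ?_⟩
      rw [cluster_even hρ hρR hn, cluster_even hρ hρR hm, Set.image_pair]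
      simp only [rrTrans_apply]
      have e1 : dPt R ρ (n+1) = dPt R ρ n + ρ := by rw [hstep_n, dGap, if_pos hn]
      have e2 : dPt R ρ (m+1) = dPt R ρ m + ρ := by rw [hstep_m, dGap, if_pos hm]
      rw [e1, e2, show dPt R ρ n + (dPt R ρ m - dPt R ρ n) = dPt R ρ m by ring,
        show dPt R ρ n + ρ + (dPt R ρ m - dPt R ρ n) = dPt R ρ m + ρ by ring]
    · -- even, odd : reflection
      have hm' : ¬ Even m := by rw [Int.even_iff]; rw [Int.odd_iff] at hm; omega
      have hm1 : Even (m - 1) := by rw [Int.even_iff]; rw [Int.odd_iff] at hm; omega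
      have hstep_m1 : dPt R ρ ((m-1)+1) = dPt R ρ (m-1) + dGap R ρ (m-1) := dPt_step _
      rw [show (m-1)+1 = m by ring] at hstep_m1
      refine ⟨rrRefl (dPt R ρ n + dPt R ρ m), by rw [rrRefl_apply]; ring, ?_⟩
      rw [cluster_even hρ hρR hn, cluster_odd hρ hρR hm', Set.image_pair]
      simp only [rrRefl_apply]
      have e1 : dPt R ρ (n+1) = dPt R ρ n + ρ := by rw [hstep_n, dGap, if_pos hn]
      have e2 : dPt R ρ m = dPt R ρ (m-1) + ρ := by rw [hstep_m1, dGap, if_pos hm1]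
      rw [e1, Set.pair_comm]
      rw [show dPt R ρ n + dPt R ρ m - (dPt R ρ n + ρ) = dPt R ρ m - ρ by ring,
        show dPt R ρ n + dPt R ρ m - dPt R ρ n = dPt R ρ m by ring]
      rw [show dPt R ρ m - ρ = dPt R ρ (m-1) by rw [e2]; ring]
    · -- odd, even : reflection
      have hn' : ¬ Even n := by rw [Int.even_iff]; rw [Int.odd_iff] at hn; omega
      have hn1 : Even (n - 1) := by rw [Int.even_iff]; rw [Int.odd_iff] at hn; omega
      have hstep_n1 : dPt R ρ ((n-1)+1) = dPt R ρ (n-1) + dGap R ρ (n-1) := dPt_step _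
      rw [show (n-1)+1 = n by ring] at hstep_n1
      refine ⟨rrRefl (dPt R ρ n + dPt R ρ m), by rw [rrRefl_apply]; ring, ?_⟩
      rw [cluster_odd hρ hρR hn', cluster_even hρ hρR hm, Set.image_pair]
      simp only [rrRefl_apply]
      have e1 : dPt R ρ n = dPt R ρ (n-1) + ρ := by rw [hstep_n1, dGap, if_pos hn1]
      have e2 : dPt R ρ (m+1) = dPt R ρ m + ρ := by rw [hstep_m, dGap, if_pos hm]
      rw [Set.pair_comm]
      rw [show dPt R ρ n + dPt R ρ m - dPt R ρ n = dPt R ρ m by ring]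
      rw [show dPt R ρ n + dPt R ρ m - dPt R ρ (n-1) = dPt R ρ m + ρ by rw [e1]; ring]
      rw [e2]
    · -- odd, odd : translation
      have hn' : ¬ Even n := by rw [Int.even_iff]; rw [Int.odd_iff] at hn; omega
      have hm' : ¬ Even m := by rw [Int.even_iff]; rw [Int.odd_iff] at hm; omega
      have hn1 : Even (n - 1) := by rw [Int.even_iff]; rw [Int.odd_iff] at hn; omega
      have hm1 : Even (m - 1) := by rw [Int.even_iff]; rw [Int.odd_iff] at hm; omega
      have hstep_n1 : dPt R ρ ((n-1)+1) = dPt R ρ (n-1) + dGap R ρ (n-1) := dPt_step _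
      rw [show (n-1)+1 = n by ring] at hstep_n1
      have hstep_m1 : dPt R ρ ((m-1)+1) = dPt R ρ (m-1) + dGap R ρ (m-1) := dPt_step _
      rw [show (m-1)+1 = m by ring] at hstep_m1
      refine ⟨rrTrans (dPt R ρ m - dPt R ρ n), by rw [rrTrans_apply]; ring, ?_⟩
      rw [cluster_odd hρ hρR hn', cluster_odd hρ hρR hm', Set.image_pair]
      simp only [rrTrans_apply]
      have e1 : dPt R ρ n = dPt R ρ (n-1) + ρ := by rw [hstep_n1, dGap, if_pos hn1]
      have e2 : dPt R ρ m = dPt R ρ (m-1) + ρ := by rw [hstep_m1, dGap, if_pos hm1]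
      rw [show dPt R ρ (n-1) + (dPt R ρ m - dPt R ρ n) = dPt R ρ (m-1) by
        rw [e1, e2]; ring]
      rw [show dPt R ρ n + (dPt R ρ m - dPt R ρ n) = dPt R ρ m by ring]
  · -- not regular
    intro hreg
    obtain ⟨g, hgX, hg01⟩ := hreg (dPt R ρ 0) ⟨0, rfl⟩ (dPt R ρ 1) ⟨1, rfl⟩
    have heven0 : Even (0:ℤ) := ⟨0, rfl⟩
    have hodd1 : ¬ Even (1:ℤ) := by rw [Int.even_iff]; omega
    have hoddm1 : ¬ Even (-1:ℤ) := by rw [Int.even_iff]; omega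
    have e01 : dPt R ρ 1 = dPt R ρ 0 + ρ := by
      have h := dPt_step (R := R) (ρ := ρ) 0
      rw [show (0:ℤ)+1 = 1 by ring] at h
      rw [h, dGap, if_pos heven0]
    have e12 : dPt R ρ 2 = dPt R ρ 1 + dGap R ρ 1 := by
      have h := dPt_step (R := R) (ρ := ρ) 1
      rw [show (1:ℤ)+1 = 2 by ring] at h
      exact h
    have e0m1 : dPt R ρ 0 = dPt R ρ (-1) + dGap R ρ (-1) := by
      have h := dPt_step (R := R) (ρ := ρ) (-1)
      rw [show (-1:ℤ)+1 = 0 by ring] at h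
      exact h
    have hgap1 : ρ < dGap R ρ 1 := dGap_odd_lb hρR hodd1
    have hgapm1 : ρ < dGap R ρ (-1) := dGap_odd_lb hρR hoddm1
    rcases real_isometry_form g with hT | hRfl
    · -- translation, c = ρ
      have hc : g 0 = ρ := by
        have h := hT (dPt R ρ 0)
        rw [hg01, e01] at h
        linarith
      have hmem : dPt R ρ 1 + ρ ∈ Set.range (dPt R ρ) := by
        rw [← hgX]
        refine ⟨dPt R ρ 1, ⟨1, rfl⟩, ?_⟩
        rw [hT, hc]
      obtain ⟨m, hm⟩ := hmem
      have hlt1 : dPt R ρ 1 < dPt R ρ m := by rw [hm]; linarith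
      have hlt2 : dPt R ρ m < dPt R ρ 2 := by rw [hm]; linarith
      have h1 := (dPt_lt_iff hρ hρR).mp hlt1
      have h2 := (dPt_lt_iff hρ hρR).mp hlt2
      omega
    · -- reflection, c = P0 + P1
      have hc : g 0 = dPt R ρ 0 + dPt R ρ 1 := by
        have h := hRfl (dPt R ρ 0)
        rw [hg01] at h
        linarith
      have hne : dGap R ρ 1 ≠ dGap R ρ (-1) := by
        intro h
        have := dGap_inj hρR hodd1 hoddm1 h
        omega
      rcases lt_or_gt_of_ne hne with hlt | hgt
      · -- dGap 1 < dGap (-1) : use g (P 2) = P0 - dGap 1, strictly between P(-1) and P0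
        have hmem : dPt R ρ 0 + dPt R ρ 1 - dPt R ρ 2 ∈ Set.range (dPt R ρ) := by
          rw [← hgX]
          refine ⟨dPt R ρ 2, ⟨2, rfl⟩, ?_⟩
          rw [hRfl, hc]
        obtain ⟨m, hm⟩ := hmem
        have hv : dPt R ρ m = dPt R ρ 0 - dGap R ρ 1 := by rw [hm, e12]; ring
        have hlt1 : dPt R ρ (-1) < dPt R ρ m := by rw [hv, e0m1]; linarith
        have hlt2 : dPt R ρ m < dPt R ρ 0 := by rw [hv]; linarith
        have h1 := (dPt_lt_iff hρ hρR).mp hlt1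
        have h2 := (dPt_lt_iff hρ hρR).mp hlt2
        omega
      · -- dGap 1 > dGap (-1) : use g (P (-1)) = P1 + dGap (-1), strictly between P1 and P2
        have hmem : dPt R ρ 0 + dPt R ρ 1 - dPt R ρ (-1) ∈ Set.range (dPt R ρ) := by
          rw [← hgX]
          refine ⟨dPt R ρ (-1), ⟨-1, rfl⟩, ?_⟩
          rw [hRfl, hc]
        obtain ⟨m, hm⟩ := hmem
        have hv : dPt R ρ m = dPt R ρ 1 + dGap R ρ (-1) := by rw [hm, e0m1]; ring
        have hlt1 : dPt R ρ 1 < dPt R ρ m := by rw [hv]; linarith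
        have hlt2 : dPt R ρ m < dPt R ρ 2 := by rw [hv, e12]; linarith
        have h1 := (dPt_lt_iff hρ hρR).mp hlt1
        have h2 := (dPt_lt_iff hρ hρR).mp hlt2
        omega
lemma part2 (R : ℝ) (hR : 0 < R) (r : ℝ) (X : Set ℝ) (hr : 0 < r) (hrR : r < R)
    (hDel : IsDeloneSet X r R)
    (hEq : ∀ x ∈ X, ∀ x' ∈ X, ClustersEquiv X x x' (2*R)) : IsRegularSystem X := by
  obtain ⟨hpack, hcov⟩ := hDel
  -- separation
  have hsep : ∀ u ∈ X, ∀ v ∈ X, u ≠ v → 2*r ≤ |u - v| := by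
    intro u hu v hv hne
    by_contra hc
    push_neg at hc
    rw [abs_lt] at hc
    have h1 : u ∈ Metric.ball ((u+v)/2) r := by
      rw [Metric.mem_ball, Real.dist_eq, abs_lt]
      constructor <;> [linarith [hc.1]; linarith [hc.2]]
    have h2 : v ∈ Metric.ball ((u+v)/2) r := by
      rw [Metric.mem_ball, Real.dist_eq, abs_lt]
      constructor <;> [linarith [hc.2]; linarith [hc.1]]
    exact hne (hpack ((u+v)/2) ⟨hu, h1⟩ ⟨hv, h2⟩)
  -- gap fill upwards
  have hgapU : ∀ x : ℝ, ∃ z ∈ X, x < z ∧ z ≤ x + 2*R := by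
    intro x
    by_contra hc
    push_neg at hc
    have hw : ∀ t : ℝ, 0 < t → t ≤ r → ∃ w ∈ X, x + 2*R < w ∧ w ≤ x + 2*R + t := by
      intro t ht htr
      obtain ⟨w, hwX, hwb⟩ := hcov (x + R + t)
      rw [Metric.mem_closedBall, Real.dist_eq, abs_le] at hwb
      have hw1 : x + t ≤ w := by linarith [hwb.1]
      have hw2 : w ≤ x + 2*R + t := by linarith [hwb.2]
      have := hc w hwX (by linarith)
      exact ⟨w, hwX, this, hw2⟩
    obtain ⟨w1, hw1X, hw1a, hw1b⟩ := hw r hr (le_refl r)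
    have hle : ∀ t : ℝ, 0 < t → t ≤ r → w1 ≤ x + 2*R + t := by
      intro t ht htr
      obtain ⟨w2, hw2X, hw2a, hw2b⟩ := hw t ht htr
      have heq : w1 = w2 := by
        by_contra hne
        have := hsep w1 hw1X w2 hw2X hne
        rcases abs_cases (w1 - w2) with ⟨h4, _⟩ | ⟨h4, _⟩ <;> linarith
      rw [heq]; exact hw2b
    have : w1 ≤ x + 2*R := by
      by_contra hgt
      push_neg at hgt
      set t := min r ((w1 - (x + 2*R))/2) with htdef
      have ht1 : 0 < t := lt_min hr (by linarith)
      have ht2 : t ≤ r := min_le_left _ _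
      have := hle t ht1 ht2
      have h3 : t ≤ (w1 - (x + 2*R))/2 := min_le_right _ _
      linarith
    linarith
  -- gap fill downwards
  have hgapD : ∀ x : ℝ, ∃ z ∈ X, z < x ∧ x - 2*R ≤ z := by
    intro x
    by_contra hc
    push_neg at hc
    have hw : ∀ t : ℝ, 0 < t → t ≤ r → ∃ w ∈ X, x - 2*R - t ≤ w ∧ w < x - 2*R := by
      intro t ht htr
      obtain ⟨w, hwX, hwb⟩ := hcov (x - R - t)
      rw [Metric.mem_closedBall, Real.dist_eq, abs_le] at hwb
      have hw1 : x - 2*R - t ≤ w := by linarith [hwb.1]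
      have hw2 : w ≤ x - t := by linarith [hwb.2]
      have := hc w hwX (by linarith)
      exact ⟨w, hwX, hw1, this⟩
    obtain ⟨w1, hw1X, hw1a, hw1b⟩ := hw r hr (le_refl r)
    have hle : ∀ t : ℝ, 0 < t → t ≤ r → x - 2*R - t ≤ w1 := by
      intro t ht htr
      obtain ⟨w2, hw2X, hw2a, hw2b⟩ := hw t ht htr
      have heq : w1 = w2 := by
        by_contra hne
        have := hsep w1 hw1X w2 hw2X hne
        rcases abs_cases (w1 - w2) with ⟨h4, _⟩ | ⟨h4, _⟩ <;> linarith
      rw [heq]; exact hw2a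
    have : x - 2*R ≤ w1 := by
      by_contra hgt
      push_neg at hgt
      set t := min r ((x - 2*R - w1)/2) with htdef
      have ht1 : 0 < t := lt_min hr (by linarith)
      have ht2 : t ≤ r := min_le_left _ _
      have := hle t ht1 ht2
      have h3 : t ≤ (x - 2*R - w1)/2 := min_le_right _ _
      linarith
    linarith
  -- least element above
  have hnext : ∀ x : ℝ, ∃ z, z ∈ X ∧ x < z ∧ z ≤ x + 2*R ∧ ∀ w ∈ X, x < w → z ≤ w := by
    intro x
    obtain ⟨z0, hz0X, hz0a, hz0b⟩ := hgapU x
    set S : Set ℝ := X ∩ Set.Ioi x with hSdef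
    have hSne : S.Nonempty := ⟨z0, hz0X, hz0a⟩
    obtain ⟨z1, hz1S, hz1lt⟩ := Real.lt_sInf_add_pos hSne hr
    have hSbdd : BddBelow S := ⟨x, fun w hw => le_of_lt hw.2⟩
    have hleast : ∀ w ∈ X, x < w → z1 ≤ w := by
      intro w hwX hxw
      by_contra hlt
      push_neg at hlt
      have hwS : w ∈ S := ⟨hwX, hxw⟩
      have h1 : sInf S ≤ w := csInf_le hSbdd hwS
      have hne : z1 ≠ w := ne_of_gt hlt
      have := hsep z1 hz1S.1 w hwX hne
      rcases abs_cases (z1 - w) with ⟨h4, _⟩ | ⟨h4, _⟩ <;> linarith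
    exact ⟨z1, hz1S.1, hz1S.2, le_trans (hleast z0 hz0X hz0a) hz0b, hleast⟩
  -- greatest element below
  have hprev : ∀ x : ℝ, ∃ z, z ∈ X ∧ z < x ∧ x - 2*R ≤ z ∧ ∀ w ∈ X, w < x → w ≤ z := by
    intro x
    obtain ⟨z0, hz0X, hz0a, hz0b⟩ := hgapD x
    set S : Set ℝ := X ∩ Set.Iio x with hSdef
    have hSne : S.Nonempty := ⟨z0, hz0X, hz0a⟩
    obtain ⟨z1, hz1S, hz1lt⟩ := Real.add_neg_lt_sSup hSne (neg_lt_zero.mpr hr)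
    have hSbdd : BddAbove S := ⟨x, fun w hw => le_of_lt hw.2⟩
    have hgreat : ∀ w ∈ X, w < x → w ≤ z1 := by
      intro w hwX hxw
      by_contra hlt
      push_neg at hlt
      have hwS : w ∈ S := ⟨hwX, hxw⟩
      have h1 : w ≤ sSup S := le_csSup hSbdd hwS
      have hne : z1 ≠ w := ne_of_lt hlt
      have := hsep z1 hz1S.1 w hwX hne
      rcases abs_cases (z1 - w) with ⟨h4, _⟩ | ⟨h4, _⟩ <;> linarith
    exact ⟨z1, hz1S.1, hz1S.2, le_trans hz0b (hgreat z0 hz0X hz0a), hgreat⟩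
  choose nxt hnxtX hnxtlt hnxtle hnxtmin using hnext
  choose prv hprvX hprvlt hprvge hprvmax using hprev
  have hprv_nxt : ∀ x ∈ X, prv (nxt x) = x := by
    intro x hx
    have h1 : x ≤ prv (nxt x) := hprvmax (nxt x) x hx (hnxtlt x)
    rcases eq_or_lt_of_le h1 with h | h
    · exact h.symm
    · have := hnxtmin x (prv (nxt x)) (hprvX (nxt x)) h
      exact absurd (hprvlt (nxt x)) (not_lt.mpr this)
  have hnxt_prv : ∀ x ∈ X, nxt (prv x) = x := by
    intro x hx
    have h1 : nxt (prv x) ≤ x := hnxtmin (prv x) x hx (hprvlt x)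
    rcases eq_or_lt_of_le h1 with h | h
    · exact h
    · have := hprvmax x (nxt (prv x)) (hnxtX (prv x)) h
      exact absurd (hnxtlt (prv x)) (not_lt.mpr this)
  -- base point
  obtain ⟨x₀, hx₀, -⟩ := hcov 0
  set a := nxt x₀ - x₀ with hadef
  set b := x₀ - prv x₀ with hbdef
  set c := a + b with hcdef
  have ha : 0 < a := by have := hnxtlt x₀; simp only [hadef]; linarith
  have hb : 0 < b := by have := hprvlt x₀; simp only [hbdef]; linarith
  have hc : 0 < c := by simp only [hcdef]; linarith
  -- the key pair lemma from cluster equivalence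
  have hpair : ∀ x ∈ X, (nxt x - x = a ∧ x - prv x = b) ∨ (nxt x - x = b ∧ x - prv x = a) := by
    intro x hx
    obtain ⟨g, hgx, hgc⟩ := hEq x₀ hx₀ x hx
    have hmemN : nxt x₀ ∈ cluster X x₀ (2*R) := by
      refine ⟨hnxtX x₀, ?_⟩
      rw [Metric.mem_closedBall, Real.dist_eq, abs_of_nonneg (by linarith [hnxtlt x₀])]
      linarith [hnxtle x₀]
    have hmemP : prv x₀ ∈ cluster X x₀ (2*R) := by
      refine ⟨hprvX x₀, ?_⟩
      rw [Metric.mem_closedBall, Real.dist_eq, abs_of_nonpos (by linarith [hprvlt x₀])]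
      linarith [hprvge x₀]
    have hmemN' : nxt x ∈ cluster X x (2*R) := by
      refine ⟨hnxtX x, ?_⟩
      rw [Metric.mem_closedBall, Real.dist_eq, abs_of_nonneg (by linarith [hnxtlt x])]
      linarith [hnxtle x]
    have hmemP' : prv x ∈ cluster X x (2*R) := by
      refine ⟨hprvX x, ?_⟩
      rw [Metric.mem_closedBall, Real.dist_eq, abs_of_nonpos (by linarith [hprvlt x])]
      linarith [hprvge x]
    rcases real_isometry_form g with hT | hRf
    · -- translation
      have hc0 : g 0 = x - x₀ := by have := hT x₀; rw [hgx] at this; linarith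
      left
      have h1 : nxt x₀ + (x - x₀) ∈ cluster X x (2*R) := by
        rw [← hgc]
        have := Set.mem_image_of_mem g hmemN
        rwa [hT, hc0] at this
      have h2 : nxt x ≤ nxt x₀ + (x - x₀) := by
        refine hnxtmin x _ h1.1 ?_
        linarith [hnxtlt x₀]
      have h3 : ∃ w ∈ cluster X x₀ (2*R), g w = nxt x := by
        have : nxt x ∈ g '' cluster X x₀ (2*R) := by rw [hgc]; exact hmemN'
        obtain ⟨w, hw, hwe⟩ := this
        exact ⟨w, hw, hwe⟩
      obtain ⟨w, hwc, hwe⟩ := h3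
      rw [hT, hc0] at hwe
      have hwX : w ∈ X := hwc.1
      have hwgt : x₀ < w := by have := hnxtlt x; linarith
      have h4 : nxt x₀ ≤ w := hnxtmin x₀ w hwX hwgt
      have hNeq : nxt x = nxt x₀ + (x - x₀) := le_antisymm h2 (by linarith)
      -- prev side
      have h5 : prv x₀ + (x - x₀) ∈ cluster X x (2*R) := by
        rw [← hgc]
        have := Set.mem_image_of_mem g hmemP
        rwa [hT, hc0] at this
      have h6 : prv x₀ + (x - x₀) ≤ prv x := by
        refine hprvmax x _ h5.1 ?_
        linarith [hprvlt x₀]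
      have h7 : ∃ w ∈ cluster X x₀ (2*R), g w = prv x := by
        have : prv x ∈ g '' cluster X x₀ (2*R) := by rw [hgc]; exact hmemP'
        obtain ⟨w, hw, hwe⟩ := this
        exact ⟨w, hw, hwe⟩
      obtain ⟨w', hwc', hwe'⟩ := h7
      rw [hT, hc0] at hwe'
      have hwX' : w' ∈ X := hwc'.1
      have hwlt : w' < x₀ := by have := hprvlt x; linarith
      have h8 : w' ≤ prv x₀ := hprvmax x₀ w' hwX' hwlt
      have hPeq : prv x = prv x₀ + (x - x₀) := le_antisymm (by linarith) h6
      constructor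
      · rw [hNeq, hadef]; ring
      · rw [hPeq, hbdef]; ring
    · -- reflection
      have hc0 : g 0 = x + x₀ := by have := hRf x₀; rw [hgx] at this; linarith
      right
      have h1 : (x + x₀) - nxt x₀ ∈ cluster X x (2*R) := by
        rw [← hgc]
        have := Set.mem_image_of_mem g hmemN
        rwa [hRf, hc0] at this
      have h2 : (x + x₀) - nxt x₀ ≤ prv x := by
        refine hprvmax x _ h1.1 ?_
        linarith [hnxtlt x₀]
      have h3 : ∃ w ∈ cluster X x₀ (2*R), g w = prv x := by
        have : prv x ∈ g '' cluster X x₀ (2*R) := by rw [hgc]; exact hmemP'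
        obtain ⟨w, hw, hwe⟩ := this
        exact ⟨w, hw, hwe⟩
      obtain ⟨w, hwc, hwe⟩ := h3
      rw [hRf, hc0] at hwe
      have hwX : w ∈ X := hwc.1
      have hwgt : x₀ < w := by have := hprvlt x; linarith
      have h4 : nxt x₀ ≤ w := hnxtmin x₀ w hwX hwgt
      have hPeq : prv x = (x + x₀) - nxt x₀ := le_antisymm (by linarith) h2
      -- next side
      have h5 : (x + x₀) - prv x₀ ∈ cluster X x (2*R) := by
        rw [← hgc]
        have := Set.mem_image_of_mem g hmemP
        rwa [hRf, hc0] at this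
      have h6 : nxt x ≤ (x + x₀) - prv x₀ := by
        refine hnxtmin x _ h5.1 ?_
        linarith [hprvlt x₀]
      have h7 : ∃ w ∈ cluster X x₀ (2*R), g w = nxt x := by
        have : nxt x ∈ g '' cluster X x₀ (2*R) := by rw [hgc]; exact hmemN'
        obtain ⟨w, hw, hwe⟩ := this
        exact ⟨w, hw, hwe⟩
      obtain ⟨w', hwc', hwe'⟩ := h7
      rw [hRf, hc0] at hwe'
      have hwX' : w' ∈ X := hwc'.1
      have hwlt : w' < x₀ := by have := hnxtlt x; linarith
      have h8 : w' ≤ prv x₀ := hprvmax x₀ w' hwX' hwlt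
      have hNeq : nxt x = (x + x₀) - prv x₀ := le_antisymm h6 (by linarith)
      constructor
      · rw [hNeq, hbdef]; ring
      · rw [hPeq, hadef]; ring
  -- sum of gaps is constant
  have hsum : ∀ x ∈ X, nxt x - prv x = c := by
    intro x hx
    rcases hpair x hx with ⟨h1, h2⟩ | ⟨h1, h2⟩ <;> simp only [hcdef] <;> linarith
  -- step by c
  have hplus : ∀ x ∈ X, x + c = nxt (nxt x) := by
    intro x hx
    have h1 := hsum (nxt x) (hnxtX x)
    rw [hprv_nxt x hx] at h1
    linarith
  have hminus : ∀ x ∈ X, x - c = prv (prv x) := by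
    intro x hx
    have h1 := hsum (prv x) (hprvX x)
    rw [hnxt_prv x hx] at h1
    linarith
  have hplusX : ∀ x ∈ X, x + c ∈ X := by
    intro x hx
    rw [hplus x hx]
    exact hnxtX _
  have hminusX : ∀ x ∈ X, x - c ∈ X := by
    intro x hx
    rw [hminus x hx]
    exact hprvX _
  have hnxt_plus : ∀ x ∈ X, nxt (x + c) = nxt x + c := by
    intro x hx
    have h1 := hplus (nxt x) (hnxtX x)
    rw [← hplus x hx] at h1
    linarith [h1]
  have hnxt_minus : ∀ x ∈ X, nxt (x - c) = nxt x - c := by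
    intro x hx
    have h1 := hnxt_plus (x - c) (hminusX x hx)
    rw [show x - c + c = x by ring] at h1
    linarith
  -- closure under k*c for k : ℤ
  have hZc : ∀ z ∈ X, ∀ k : ℤ, z + k*c ∈ X := by
    intro z hz k
    induction k using Int.induction_on with
    | zero => simpa using hz
    | succ i ih =>
      have h1 := hplusX _ ih
      push_cast at h1 ⊢
      have he : z + ((i:ℝ)+1)*c = z + (i:ℝ)*c + c := by ring
      rwa [he]
    | pred i ih =>
      have h1 := hminusX _ ih
      push_cast at h1 ⊢
      have he : z + (-(i:ℝ)-1)*c = z + -(i:ℝ)*c - c := by ring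
      rwa [he]
  have hnxtZc : ∀ z ∈ X, ∀ k : ℤ, nxt (z + k*c) = nxt z + k*c := by
    intro z hz k
    induction k using Int.induction_on with
    | zero => simp
    | succ i ih =>
      have hmem : z + (i:ℤ)*c ∈ X := hZc z hz i
      have h1 := hnxt_plus _ hmem
      push_cast at h1 ih ⊢
      rw [show z + ((i:ℝ)+1)*c = z + (i:ℝ)*c + c by ring, h1, ih]
      ring
    | pred i ih =>
      have hmem : z + (-(i:ℤ):ℤ)*c ∈ X := hZc z hz (-(i:ℤ))
      push_cast at hmem
      have h1 := hnxt_minus _ hmem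
      push_cast at h1 ih ⊢
      rw [show z + (-(i:ℝ)-1)*c = z + -(i:ℝ)*c - c by ring, h1, ih]
      ring
  -- description of X
  have hXD : ∀ y, y ∈ X ↔ ∃ k : ℤ, y = x₀ + k*c ∨ y = x₀ + a + k*c := by
    intro y
    constructor
    · intro hy
      set k := ⌊(y - x₀)/c⌋ with hkdef
      have hk1 : (k:ℝ) ≤ (y - x₀)/c := Int.floor_le _
      have hk2 : (y - x₀)/c < (k:ℝ) + 1 := Int.lt_floor_add_one _
      have hd1 : x₀ + k*c ≤ y := by
        have := mul_le_mul_of_nonneg_right hk1 (le_of_lt hc)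
        rw [div_mul_cancel₀ _ (ne_of_gt hc)] at this
        linarith
      have hd2 : y < x₀ + k*c + c := by
        have := mul_lt_mul_of_pos_right hk2 hc
        rw [div_mul_cancel₀ _ (ne_of_gt hc)] at this
        linarith
      have hd0X : x₀ + k*c ∈ X := hZc x₀ hx₀ k
      have hnd0 : nxt (x₀ + k*c) = x₀ + a + k*c := by
        rw [hnxtZc x₀ hx₀ k, hadef]; ring
      rcases eq_or_lt_of_le hd1 with h | h
      · exact ⟨k, Or.inl h.symm⟩
      · have h2 : nxt (x₀ + k*c) ≤ y := hnxtmin _ y hy h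
        rw [hnd0] at h2
        rcases eq_or_lt_of_le h2 with h3 | h3
        · exact ⟨k, Or.inr h3.symm⟩
        · have h4 : x₀ + a + k*c ∈ X := by rw [← hnd0]; exact hnxtX _
          have h5 : nxt (x₀ + a + k*c) ≤ y := hnxtmin _ y hy h3
          have h6 : nxt (x₀ + a + k*c) = x₀ + k*c + c := by
            rw [← hnd0, ← hplus _ hd0X]
          rw [h6] at h5
          linarith
    · rintro ⟨k, hk | hk⟩
      · rw [hk]; exact hZc x₀ hx₀ k
      · rw [hk]
        have : x₀ + a + k*c = nxt x₀ + k*c := by rw [hadef]; ring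
        rw [this]
        exact hZc (nxt x₀) (hnxtX x₀) k
  -- translation symmetries
  have htrans_img : ∀ m : ℤ, (rrTrans ((m:ℝ)*c)) '' X = X := by
    intro m
    apply Set.Subset.antisymm
    · rintro _ ⟨z, hz, rfl⟩
      rw [rrTrans_apply]
      exact hZc z hz m
    · intro z hz
      refine ⟨z + (-m:ℤ)*c, hZc z hz (-m), ?_⟩
      rw [rrTrans_apply]
      push_cast
      ring
  -- reflection symmetries
  have hreflmem : ∀ j : ℤ, ∀ z ∈ X, (2*x₀ + a + (j:ℝ)*c) - z ∈ X := by
    intro j z hz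
    rw [hXD] at hz
    obtain ⟨m, hm | hm⟩ := hz
    · rw [hXD]
      refine ⟨j - m, Or.inr ?_⟩
      rw [hm]
      push_cast
      ring
    · rw [hXD]
      refine ⟨j - m, Or.inl ?_⟩
      rw [hm]
      push_cast
      ring
  have hrefl_img : ∀ j : ℤ, (rrRefl (2*x₀ + a + (j:ℝ)*c)) '' X = X := by
    intro j
    apply Set.Subset.antisymm
    · rintro _ ⟨z, hz, rfl⟩
      rw [rrRefl_apply]
      exact hreflmem j z hz
    · intro z hz
      refine ⟨(2*x₀ + a + (j:ℝ)*c) - z, hreflmem j z hz, ?_⟩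
      rw [rrRefl_apply]
      ring
  -- conclusion
  intro x hx y hy
  rw [hXD] at hx hy
  obtain ⟨k, hk | hk⟩ := hx <;> obtain ⟨l, hl | hl⟩ := hy
  · refine ⟨rrTrans (((l - k : ℤ):ℝ)*c), htrans_img (l-k), ?_⟩
    rw [rrTrans_apply, hk, hl]
    push_cast
    ring
  · refine ⟨rrRefl (2*x₀ + a + ((k + l : ℤ):ℝ)*c), hrefl_img (k+l), ?_⟩
    rw [rrRefl_apply, hk, hl]
    push_cast
    ring
  · refine ⟨rrRefl (2*x₀ + a + ((k + l : ℤ):ℝ)*c), hrefl_img (k+l), ?_⟩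
    rw [rrRefl_apply, hk, hl]
    push_cast
    ring
  · refine ⟨rrTrans (((l - k : ℤ):ℝ)*c), htrans_img (l-k), ?_⟩
    rw [rrTrans_apply, hk, hl]
    push_cast
    ring


/-- for any `0 < ρ < 2R` there is a Delone set of type `(r,R)` on the line
(for some `r ≤ ρ/2`) with mutually equivalent `ρ`-clusters which is not a regular system;
consequently (together with the `2R`-regularity statement) `ρ̂₁ = 2R`. -/
theorem regularityRadius_dim1_eq (R ρ : ℝ) (hR : 0 < R) (hρ : 0 < ρ) (hρR : ρ < 2 * R) :
    (∃ r : ℝ, ∃ X : Set ℝ, 0 < r ∧ r ≤ ρ / 2 ∧ r < R ∧ IsDeloneSet X r R ∧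
      (∀ x ∈ X, ∀ x' ∈ X, ClustersEquiv X x x' ρ) ∧ ¬ IsRegularSystem X) ∧
    (∀ (r : ℝ) (X : Set ℝ), 0 < r → r < R → IsDeloneSet X r R →
      (∀ x ∈ X, ∀ x' ∈ X, ClustersEquiv X x x' (2 * R)) → IsRegularSystem X) := by
  exact ⟨part1 R ρ hR hρ hρR, fun r X hr hrR hDel hEq => part2 R hR r X hr hrR hDel hEq⟩
end
end

section
/- For d ≥ 2, any doubly-infinite integer sequence A satisfying (A1)–(A3), and any positive reals a, b, δ with b > a, the Engel set X(A,a,b,δ) ⊂ ℝ^d is a Delone set of type (a, √(b² + (d-1)a²)): every open ball of radius a contains at most one point of X, and every closed ball of radius √(b² + (d-1)a²) contains at least one point of X. -/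
noncomputable section
open scoped Pointwise

/-! ### Auxiliary lemmas -/

lemma coord_dist_le {d : ℕ} (x y : Euc d) (j : Fin d) : dist (x j) (y j) ≤ dist x y := by
  rw [EuclideanSpace.dist_eq]
  rw [show dist (x j) (y j) = Real.sqrt (dist (x j) (y j) ^ 2) from
    (Real.sqrt_sq dist_nonneg).symm]
  exact Real.sqrt_le_sqrt (Finset.single_le_sum (f := fun i => dist (x i) (y i) ^ 2)
    (fun i _ => sq_nonneg _) (Finset.mem_univ j))

lemma eVec_apply {d k : ℕ} (h : k - 1 < d) (j : Fin d) :
    eVec d k j = if (j : ℕ) = k - 1 then 1 else 0 := by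
  rw [eVec, dif_pos h, EuclideanSpace.single_apply]
  congr 1
  simp [Fin.ext_iff]

lemma engelU_last {d : ℕ} (hd : 2 ≤ d) {A : ℤ → ℤ} (hA : EngelSeq d A) (i : ℤ)
    (j : Fin d) (hj : (j : ℕ) = d - 1) : engelU d A i j = 0 := by
  obtain ⟨h1, h2⟩ := hA.1 i
  have hk : (A i).natAbs - 1 < d := by omega
  rw [engelU, PiLp.smul_apply, eVec_apply hk,
    if_neg (show ¬((j : ℕ) = (A i).natAbs - 1) by omega), smul_zero]

lemma engelCum_last {d : ℕ} (hd : 2 ≤ d) {A : ℤ → ℤ} (hA : EngelSeq d A) (i : ℤ)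
    (j : Fin d) (hj : (j : ℕ) = d - 1) : engelCum d A i j = 0 := by
  have key : ∀ (s : Finset ℕ) (f : ℕ → ℤ), (∑ k ∈ s, engelU d A (f k)) j = 0 := by
    intro s f
    refine Finset.sum_induction _ (fun v : Euc d => v j = 0) (fun u v hu hv => ?_) ?_ ?_
    · show (u + v) j = 0
      rw [PiLp.add_apply, show u j = 0 from hu, show v j = 0 from hv, add_zero]
    · rfl
    · intro k _; exact engelU_last hd hA _ j hj
  rw [engelCum]
  split
  · exact key _ _
  · rw [PiLp.neg_apply, key _ _, neg_zero]

lemma engelOffset_last {d : ℕ} (hd : 2 ≤ d) {A : ℤ → ℤ} (hA : EngelSeq d A)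
    (b δ : ℝ) (m : ℤ) (j : Fin d) (hj : (j : ℕ) = d - 1) :
    engelOffset d A b δ m j = 2 * b * m := by
  rw [engelOffset, PiLp.add_apply, PiLp.smul_apply, PiLp.smul_apply,
    engelCum_last hd hA _ j hj, smul_zero, add_zero,
    eVec_apply (show d - 1 < d by omega), if_pos hj, smul_eq_mul, mul_one]

/-- for `b > a > 0`, the Engel set `X(A,a,b,δ)` is a Delone set of
type `(a, √(b² + (d-1)a²))`. -/
theorem engelSet_isDelone (d : ℕ) (hd : 2 ≤ d) (A : ℤ → ℤ) (hA : EngelSeq d A)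
    (a b δ : ℝ) (ha : 0 < a) (hab : a < b) (hδ : 0 < δ) :
    IsDeloneSet (engelSet d A a b δ) a (Real.sqrt (b ^ 2 + ((d : ℝ) - 1) * a ^ 2)) := by
  classical
  have hdd : d - 1 < d := by omega
  set lf : Fin d := ⟨d - 1, hdd⟩ with hlf
  have hlfc : (lf : ℕ) = d - 1 := rfl
  constructor
  · -- packing
    intro y x hx x' hx'
    obtain ⟨hxX, hxb⟩ := hx
    obtain ⟨hx'X, hx'b⟩ := hx'
    by_contra hne
    rw [Metric.mem_ball] at hxb hx'b
    have hdist : dist x x' < 2 * a := by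
      calc dist x x' ≤ dist x y + dist x' y := dist_triangle_right x x' y
        _ < 2 * a := by linarith
    obtain ⟨m, hm⟩ := Set.mem_iUnion.mp hxX
    obtain ⟨m', hm'⟩ := Set.mem_iUnion.mp hx'X
    rw [engelLayer] at hm hm'
    obtain ⟨g, hg, hgx⟩ := Set.mem_vadd_set.mp hm
    obtain ⟨g', hg', hgx'⟩ := Set.mem_vadd_set.mp hm'
    rw [vadd_eq_add] at hgx hgx'
    have hxlast : x lf = 2 * b * m := by
      rw [← hgx, PiLp.add_apply, engelOffset_last hd hA b δ m lf hlfc,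
        (hg lf).2 hlfc, add_zero]
    have hx'last : x' lf = 2 * b * m' := by
      rw [← hgx', PiLp.add_apply, engelOffset_last hd hA b δ m' lf hlfc,
        (hg' lf).2 hlfc, add_zero]
    by_cases hmm : m = m'
    · subst hmm
      have hgg' : g ≠ g' := by
        intro h; exact hne (by rw [← hgx, ← hgx', h])
      have : ¬ ∀ j, g j = g' j := fun h => hgg' (PiLp.ext h)
      obtain ⟨j, hj⟩ := not_forall.mp this
      have hjlt : (j : ℕ) < d - 1 := by
        rcases Nat.lt_or_ge (j : ℕ) (d - 1) with h | h
        · exact h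
        · exfalso
          have hje : (j : ℕ) = d - 1 := by omega
          exact hj (by rw [(hg j).2 hje, (hg' j).2 hje])
      obtain ⟨n, hn⟩ := (hg j).1 hjlt
      obtain ⟨n', hn'⟩ := (hg' j).1 hjlt
      have hnn' : n ≠ n' := by
        intro h; exact hj (by rw [hn, hn', h])
      have h1 : (1 : ℝ) ≤ |(n : ℝ) - (n' : ℝ)| := by
        exact_mod_cast Int.one_le_abs (sub_ne_zero.mpr hnn')
      have hxj : x j - x' j = 2 * a * ((n : ℝ) - n') := by
        rw [← hgx, ← hgx', PiLp.add_apply, PiLp.add_apply, hn, hn']; ring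
      have h2a : 2 * a ≤ dist (x j) (x' j) := by
        rw [Real.dist_eq, hxj, abs_mul, abs_of_pos (by linarith : (0:ℝ) < 2 * a)]
        nlinarith
      have := coord_dist_le x x' j
      linarith
    · have h1 : (1 : ℝ) ≤ |(m : ℝ) - (m' : ℝ)| := by
        exact_mod_cast Int.one_le_abs (sub_ne_zero.mpr hmm)
      have h2b : 2 * b ≤ dist (x lf) (x' lf) := by
        rw [Real.dist_eq, hxlast, hx'last,
          show 2 * b * (m:ℝ) - 2 * b * (m':ℝ) = 2 * b * ((m:ℝ) - m') by ring,
          abs_mul, abs_of_pos (by linarith : (0:ℝ) < 2 * b)]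
        nlinarith
      have := coord_dist_le x x' lf
      linarith
  · -- covering
    intro y
    have hb0 : (0 : ℝ) < 2 * b := by linarith
    have ha0 : (0 : ℝ) < 2 * a := by linarith
    set m : ℤ := round (y lf / (2 * b)) with hmdef
    set off : Euc d := engelOffset d A b δ m with hoff
    set g : Euc d := WithLp.toLp 2 (fun j : Fin d => if (j : ℕ) = d - 1 then (0 : ℝ)
      else 2 * a * (round ((y j - off j) / (2 * a)) : ℝ)) with hgdef
    have hgmem : g ∈ engelGrid d a := by
      intro j
      constructor
      · intro hjlt
        exact ⟨round ((y j - off j) / (2 * a)), by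
          show (if (j : ℕ) = d - 1 then (0:ℝ) else _) = _
          rw [if_neg (by omega)]⟩
      · intro hje
        show (if (j : ℕ) = d - 1 then (0:ℝ) else _) = 0
        rw [if_pos hje]
    refine ⟨off + g, Set.mem_iUnion.mpr ⟨m, Set.mem_vadd_set.mpr ⟨g, hgmem, by
      rw [vadd_eq_add]⟩⟩, ?_⟩
    rw [Metric.mem_closedBall, dist_comm, EuclideanSpace.dist_eq]
    apply Real.sqrt_le_sqrt
    have hbound : ∀ j : Fin d, dist (y j) ((off + g) j) ^ 2 ≤
        if j = lf then b ^ 2 else a ^ 2 := by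
      intro j
      by_cases hje : j = lf
      · rw [if_pos hje]
        subst hje
        have hgval : g lf = 0 := by
          show (if ((lf : Fin d) : ℕ) = d - 1 then (0:ℝ) else _) = 0
          rw [if_pos hlfc]
        have hval : (off + g) lf = 2 * b * m := by
          rw [PiLp.add_apply, hgval, add_zero, hoff,
            engelOffset_last hd hA b δ m lf hlfc]
        rw [hval, Real.dist_eq]
        have h1 : |y lf / (2 * b) - (m : ℝ)| ≤ 1 / 2 := abs_sub_round _
        have h2 : y lf - 2 * b * m = (2 * b) * (y lf / (2 * b) - m) := by
          field_simp [(by linarith : b ≠ 0)] <;> ring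
        have h3 : |y lf - 2 * b * m| ≤ b := by
          rw [h2, abs_mul, abs_of_pos hb0]
          calc (2 * b) * |y lf / (2 * b) - (m:ℝ)| ≤ (2 * b) * (1 / 2) :=
            mul_le_mul_of_nonneg_left h1 (le_of_lt hb0)
            _ = b := by ring
        have h4 : (0:ℝ) ≤ |y lf - 2 * b * m| := abs_nonneg _
        nlinarith
      · rw [if_neg hje]
        have hjne : (j : ℕ) ≠ d - 1 := by
          intro h; exact hje (Fin.ext (by rw [h, hlfc]))
        set n : ℤ := round ((y j - off j) / (2 * a)) with hn
        have hgval : g j = 2 * a * (n : ℝ) := by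
          show (if (j : ℕ) = d - 1 then (0:ℝ) else _) = _
          rw [if_neg hjne]
        have hval : (off + g) j = off j + 2 * a * n := by
          rw [PiLp.add_apply, hgval]
        rw [hval, Real.dist_eq]
        have h1 : |(y j - off j) / (2 * a) - (n : ℝ)| ≤ 1 / 2 := abs_sub_round _
        have h2 : y j - (off j + 2 * a * n) = (2 * a) * ((y j - off j) / (2 * a) - n) := by
          field_simp <;> ring
        have h3 : |y j - (off j + 2 * a * n)| ≤ a := by
          rw [h2, abs_mul, abs_of_pos ha0]
          calc (2 * a) * |(y j - off j) / (2 * a) - (n:ℝ)| ≤ (2 * a) * (1 / 2) :=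
            mul_le_mul_of_nonneg_left h1 (le_of_lt ha0)
            _ = a := by ring
        have h4 : (0:ℝ) ≤ |y j - (off j + 2 * a * n)| := abs_nonneg _
        nlinarith
    calc ∑ i, dist (y i) ((off + g) i) ^ 2
        ≤ ∑ i, (if i = lf then b ^ 2 else a ^ 2) :=
          Finset.sum_le_sum fun i _ => hbound i
      _ = b ^ 2 + ((d : ℝ) - 1) * a ^ 2 := by
          have hcg : (∑ i ∈ Finset.univ.erase lf, if i = lf then b ^ 2 else a ^ 2)
              = ∑ _i ∈ Finset.univ.erase lf, a ^ 2 :=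
            Finset.sum_congr rfl fun i hi => if_neg (Finset.ne_of_mem_erase hi)
          rw [← Finset.add_sum_erase _ _ (Finset.mem_univ lf), if_pos rfl, hcg,
            Finset.sum_const, Finset.card_erase_of_mem (Finset.mem_univ lf),
            Finset.card_univ, Fintype.card_fin, nsmul_eq_mul,
            Nat.cast_sub (by omega : 1 ≤ d), Nat.cast_one]
end
end

section
/- If ρ > 0 is such that for every p ∈ ℤ and every x in layer X_p of an Engel set X the ρ-cluster C_x(ρ) contains only points from layers X_l with |l − p| ≤ d − 1, then all ρ-clusters of X are mutually equivalent, i.e., N_X(ρ) = 1. -/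
noncomputable section
open scoped Pointwise

namespace EngelAux

open Metric Set

lemma natAbs_per {d : ℕ} {A : ℤ → ℤ} (hA : EngelSeq d A) :
    ∀ (n i : ℤ), (A (i + n * ((d : ℤ) - 1))).natAbs = (A i).natAbs := by
  intro n
  induction n using Int.induction_on with
  | zero => intro i; simp
  | succ k ih =>
      intro i
      have h : i + ((k : ℤ) + 1) * ((d : ℤ) - 1) = (i + k * ((d : ℤ) - 1)) + ((d : ℤ) - 1) := by
        ring
      rw [h, hA.2.1, ih]
  | pred k ih =>
      intro i
      have h2 := hA.2.1 (i + (-(k : ℤ) - 1) * ((d : ℤ) - 1))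
      have h : i + (-(k : ℤ) - 1) * ((d : ℤ) - 1) + ((d : ℤ) - 1)
          = i + (-(k : ℤ)) * ((d : ℤ) - 1) := by ring
      rw [h] at h2
      rw [← h2, ih]

lemma natAbs_inj {d : ℕ} {A : ℤ → ℤ} (hd : 2 ≤ d) (hA : EngelSeq d A) {i j : ℤ}
    (h : (A i).natAbs = (A j).natAbs) (hij : |i - j| < (d : ℤ) - 1) : i = j := by
  have hd' : (2 : ℤ) ≤ (d : ℤ) := by exact_mod_cast hd
  have hrep : ∀ m : ℤ, ∃ r : ℤ, 1 ≤ r ∧ r ≤ (d : ℤ) - 1 ∧ (A r).natAbs = (A m).natAbs ∧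
      ((d : ℤ) - 1) ∣ (m - r) := by
    intro m
    have hD0 : ((d : ℤ) - 1) ≠ 0 := by omega
    have hdiv := Int.mul_ediv_add_emod (m - 1) ((d : ℤ) - 1)
    have h1' := Int.emod_nonneg (m - 1) hD0
    have h2' := Int.emod_lt_of_pos (m - 1) (show (0:ℤ) < (d : ℤ) - 1 by omega)
    refine ⟨(m - 1) % ((d : ℤ) - 1) + 1, by omega, by omega, ?_, ?_⟩
    · have hper := natAbs_per hA ((m - 1) / ((d : ℤ) - 1)) ((m - 1) % ((d : ℤ) - 1) + 1)
      have harg : (m - 1) % ((d : ℤ) - 1) + 1 + ((m - 1) / ((d : ℤ) - 1)) * ((d : ℤ) - 1) = m := by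
        rw [mul_comm]; omega
      rw [harg] at hper
      exact hper.symm
    · exact ⟨(m - 1) / ((d : ℤ) - 1), by omega⟩
  have hinj : ∀ r s : ℤ, 1 ≤ r → r ≤ (d : ℤ) - 1 → 1 ≤ s → s ≤ (d : ℤ) - 1 →
      (A r).natAbs = (A s).natAbs → r = s := by
    intro r s hr1 hr2 hs1 hs2 hval
    have hmaps : ∀ (m : ℤ), m ∈ Finset.Icc (1 : ℤ) ((d : ℤ) - 1) →
        (((A m).natAbs : ℤ)) ∈ Finset.Icc (1 : ℤ) ((d : ℤ) - 1) := by
      intro m _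
      have h1 := hA.1 m
      simp only [Finset.mem_Icc]
      omega
    have hsurj : ∀ c ∈ Finset.Icc (1 : ℤ) ((d : ℤ) - 1), ∃ m,
        ∃ (_ : m ∈ Finset.Icc (1 : ℤ) ((d : ℤ) - 1)), (((A m).natAbs : ℤ)) = c := by
      intro c hc
      simp only [Finset.mem_Icc] at hc
      obtain ⟨m, hm1, hm2, hm3⟩ := hA.2.2 c.toNat (by omega) (by omega)
      refine ⟨m, by simp only [Finset.mem_Icc]; omega, by rw [hm3]; omega⟩
    exact Finset.inj_on_of_surj_on_of_card_le
      (s := Finset.Icc (1 : ℤ) ((d : ℤ) - 1)) (t := Finset.Icc (1 : ℤ) ((d : ℤ) - 1))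
      (fun m _ => ((A m).natAbs : ℤ)) hmaps hsurj (le_refl _)
      (by simp only [Finset.mem_Icc]; omega)
      (by simp only [Finset.mem_Icc]; omega)
      (by show ((A r).natAbs : ℤ) = ((A s).natAbs : ℤ); exact_mod_cast hval)
  obtain ⟨r, hr1, hr2, hr3, hr4⟩ := hrep i
  obtain ⟨s, hs1, hs2, hs3, hs4⟩ := hrep j
  have hrs : r = s := hinj r s hr1 hr2 hs1 hs2 (by rw [hr3, hs3, h])
  subst hrs
  obtain ⟨k1, hk1⟩ := hr4
  obtain ⟨k2, hk2⟩ := hs4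
  have hk : i - j = ((d : ℤ) - 1) * (k1 - k2) := by rw [mul_sub]; omega
  rcases eq_or_ne (k1 - k2) 0 with h0 | h0
  · rw [h0, mul_zero] at hk; omega
  · exfalso
    have h1 : 1 ≤ |k1 - k2| := Int.one_le_abs h0
    have h2 : |i - j| = ((d : ℤ) - 1) * |k1 - k2| := by
      rw [hk, abs_mul, abs_of_nonneg (show (0:ℤ) ≤ (d : ℤ) - 1 by omega)]
    have h3 : ((d : ℤ) - 1) * 1 ≤ ((d : ℤ) - 1) * |k1 - k2| :=
      mul_le_mul_of_nonneg_left h1 (by omega)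
    rw [mul_one] at h3
    omega

open Classical in
/-- a window index: an element of `[w0, w0 + d - 2]` whose `A`-value has absolute value `s`. -/
noncomputable def widx (d : ℕ) (A : ℤ → ℤ) (w0 : ℤ) (s : ℕ) : ℤ :=
  if h : ∃ i : ℤ, (w0 ≤ i ∧ i ≤ w0 + (d : ℤ) - 2) ∧ (A i).natAbs = s then h.choose else 0

lemma widx_spec {d : ℕ} {A : ℤ → ℤ} (hd : 2 ≤ d) (hA : EngelSeq d A) (w0 : ℤ) {s : ℕ}
    (h1 : 1 ≤ s) (h2 : s ≤ d - 1) :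
    (w0 ≤ widx d A w0 s ∧ widx d A w0 s ≤ w0 + (d : ℤ) - 2) ∧ (A (widx d A w0 s)).natAbs = s := by
  have hd' : (2 : ℤ) ≤ (d : ℤ) := by exact_mod_cast hd
  have hex : ∃ i : ℤ, (w0 ≤ i ∧ i ≤ w0 + (d : ℤ) - 2) ∧ (A i).natAbs = s := by
    obtain ⟨i0, hi1, hi2, hi3⟩ := hA.2.2 s h1 h2
    have hD0 : ((d : ℤ) - 1) ≠ 0 := by omega
    have hdiv := Int.mul_ediv_add_emod (w0 - i0 + ((d : ℤ) - 1) - 1) ((d : ℤ) - 1)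
    have h1' := Int.emod_nonneg (w0 - i0 + ((d : ℤ) - 1) - 1) hD0
    have h2' := Int.emod_lt_of_pos (w0 - i0 + ((d : ℤ) - 1) - 1)
      (show (0:ℤ) < (d : ℤ) - 1 by omega)
    refine ⟨i0 + ((w0 - i0 + ((d : ℤ) - 1) - 1) / ((d : ℤ) - 1)) * ((d : ℤ) - 1),
      ⟨by rw [mul_comm]; omega, by rw [mul_comm]; omega⟩, ?_⟩
    rw [natAbs_per hA _ i0, hi3]
  rw [widx, dif_pos hex]
  exact hex.choose_spec

lemma widx_eq {d : ℕ} {A : ℤ → ℤ} (hd : 2 ≤ d) (hA : EngelSeq d A) {w0 i : ℤ}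
    (hi1 : w0 ≤ i) (hi2 : i ≤ w0 + (d : ℤ) - 2) : widx d A w0 (A i).natAbs = i := by
  have hd' : (2 : ℤ) ≤ (d : ℤ) := by exact_mod_cast hd
  have hb := hA.1 i
  have hs := widx_spec hd hA w0 (s := (A i).natAbs) (by omega) (by omega)
  exact natAbs_inj hd hA hs.2 (abs_lt.mpr ⟨by omega, by omega⟩)

lemma engelCum_succ (d : ℕ) (A : ℤ → ℤ) (i : ℤ) :
    engelCum d A (i + 1) = engelCum d A i + engelU d A (i + 1) := by
  rcases le_or_gt 0 i with hi | hi
  · rw [engelCum, engelCum, if_pos (by omega : (0:ℤ) ≤ i + 1), if_pos hi]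
    have h1 : (i + 1).toNat = i.toNat + 1 := by omega
    have h2 : ((i.toNat : ℤ) + 1) = i + 1 := by omega
    rw [h1, Finset.sum_range_succ, h2]
  · rcases eq_or_lt_of_le (by omega : i + 1 ≤ 0) with h0 | h0
    · rw [engelCum, engelCum, if_pos (le_of_eq h0.symm), if_neg (by omega)]
      have h1 : (i + 1).toNat = 0 := by omega
      have h2 : (-i).toNat = 1 := by omega
      rw [h1, h2, Finset.sum_range_zero, Finset.sum_range_one]
      have h3 : -((0:ℕ):ℤ) = i + 1 := by omega
      rw [h3]
      abel
    · rw [engelCum, engelCum, if_neg (by omega), if_neg (by omega)]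
      have h1 : (-i).toNat = (-(i+1)).toNat + 1 := by omega
      rw [h1, Finset.sum_range_succ]
      have h3 : -(((-(i+1)).toNat : ℕ) : ℤ) = i + 1 := by omega
      rw [h3]
      abel

end EngelAux

/-! #### Signed permutation linear isometries -/

namespace EngelAux

def spermLIE (d : ℕ) (σ : Equiv.Perm (Fin d)) (ε : Fin d → ℝ)
    (hε : ∀ j, ε j = 1 ∨ ε j = -1) : Euc d ≃ₗᵢ[ℝ] Euc d where
  toFun := fun x => (WithLp.toLp 2 (fun j => ε j * x (σ.symm j)) : Euc d)
  invFun := fun y => (WithLp.toLp 2 (fun k => ε (σ k) * y (σ k)) : Euc d)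
  map_add' := by intro x y; ext j; simp [PiLp.add_apply]; ring
  map_smul' := by intro c x; ext j; simp [PiLp.smul_apply]; ring
  left_inv := by
    intro x; ext k
    show ε (σ k) * (ε (σ k) * x (σ.symm (σ k))) = x k
    rw [Equiv.symm_apply_apply σ k]
    rcases hε (σ k) with h | h <;> rw [h] <;> ring
  right_inv := by
    intro y; ext j
    show ε j * (ε (σ (σ.symm j)) * y (σ (σ.symm j))) = y j
    rw [Equiv.apply_symm_apply σ j]
    rcases hε j with h | h <;> rw [h] <;> ring
  norm_map' := by
    intro x
    rw [EuclideanSpace.norm_eq, EuclideanSpace.norm_eq]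
    congr 1
    rw [← Equiv.sum_comp σ.symm (fun j => ‖x j‖ ^ 2)]
    apply Finset.sum_congr rfl
    intro j _
    rcases hε j with h | h <;> simp [h, norm_mul]

lemma spermLIE_apply (d : ℕ) (σ : Equiv.Perm (Fin d)) (ε : Fin d → ℝ)
    (hε : ∀ j, ε j = 1 ∨ ε j = -1) (x : Euc d) (j : Fin d) :
    spermLIE d σ ε hε x j = ε j * x (σ.symm j) := rfl

lemma spermLIE_symm_apply (d : ℕ) (σ : Equiv.Perm (Fin d)) (ε : Fin d → ℝ)
    (hε : ∀ j, ε j = 1 ∨ ε j = -1) (y : Euc d) (k : Fin d) :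
    (spermLIE d σ ε hε).symm y k = ε (σ k) * y (σ k) := rfl

/-! #### Grid lemmas -/

lemma grid_zero (d : ℕ) (a : ℝ) : (0 : Euc d) ∈ engelGrid d a := by
  intro j
  constructor
  · intro _; exact ⟨0, by simp⟩
  · intro _; simp

lemma grid_add {d : ℕ} {a : ℝ} {y z : Euc d} (hy : y ∈ engelGrid d a)
    (hz : z ∈ engelGrid d a) : y + z ∈ engelGrid d a := by
  intro j
  constructor
  · intro hj
    obtain ⟨m, hm⟩ := (hy j).1 hj
    obtain ⟨m', hm'⟩ := (hz j).1 hj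
    exact ⟨m + m', by rw [PiLp.add_apply, hm, hm']; push_cast; ring⟩
  · intro hj
    rw [PiLp.add_apply, (hy j).2 hj, (hz j).2 hj, add_zero]

lemma grid_neg {d : ℕ} {a : ℝ} {y : Euc d} (hy : y ∈ engelGrid d a) :
    -y ∈ engelGrid d a := by
  intro j
  constructor
  · intro hj
    obtain ⟨m, hm⟩ := (hy j).1 hj
    exact ⟨-m, by rw [PiLp.neg_apply, hm]; push_cast; ring⟩
  · intro hj
    rw [PiLp.neg_apply, (hy j).2 hj, neg_zero]

/-! #### The key isometry for a step between consecutive layers -/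

lemma exists_L (d : ℕ) (hd : 2 ≤ d) (A : ℤ → ℤ) (hA : EngelSeq d A) (p : ℤ) :
    ∃ L : Euc d ≃ₗᵢ[ℝ] Euc d,
      (∀ (a : ℝ), ∀ y ∈ engelGrid d a, L y ∈ engelGrid d a) ∧
      (∀ (a : ℝ), ∀ y ∈ engelGrid d a, L.symm y ∈ engelGrid d a) ∧
      L (eVec d d) = -(eVec d d) ∧
      (∀ i : ℤ, p - (d:ℤ) + 2 ≤ 2*i → 2*i ≤ p + (d:ℤ) - 1 →
        L (engelU d A i) = -(engelU d A (p+1-i))) := by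
  have hd' : (2:ℤ) ≤ (d:ℤ) := by exact_mod_cast hd
  set α : ℤ := (p + 3 - (d:ℤ)) / 2 with hα
  set β : ℤ := p + 3 - (d:ℤ) - α with hβ
  have hbnd : ∀ i : ℤ, (A i).natAbs - 1 < d := by intro i; have := hA.1 i; omega
  set f : Fin d → Fin d := fun k =>
    if h : (k : ℕ) < d - 1 then ⟨(A (p + 1 - widx d A α ((k:ℕ)+1))).natAbs - 1, hbnd _⟩ else k
    with hf
  have hf1 : ∀ k : Fin d, (k : ℕ) < d - 1 →
      ((f k : ℕ)) = (A (p + 1 - widx d A α ((k:ℕ)+1))).natAbs - 1 := by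
    intro k hk; simp only [hf]; rw [dif_pos hk]
  have hf2 : ∀ k : Fin d, ¬((k : ℕ) < d - 1) → f k = k := by
    intro k hk; simp only [hf]; rw [dif_neg hk]
  -- injectivity of f
  have hfinj : Function.Injective f := by
    intro k k' hkk
    by_cases h1 : (k : ℕ) < d - 1 <;> by_cases h2 : (k' : ℕ) < d - 1
    · have e1 := hf1 k h1
      have e2 := hf1 k' h2
      rw [hkk] at e1
      have hb1 := hA.1 (p + 1 - widx d A α ((k:ℕ)+1))
      have hb2 := hA.1 (p + 1 - widx d A α ((k':ℕ)+1))
      have hval : (A (p + 1 - widx d A α ((k:ℕ)+1))).natAbs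
          = (A (p + 1 - widx d A α ((k':ℕ)+1))).natAbs := by omega
      have hs1 := widx_spec hd hA α (s := (k:ℕ)+1) (by omega) (by omega)
      have hs2 := widx_spec hd hA α (s := (k':ℕ)+1) (by omega) (by omega)
      have heq : p + 1 - widx d A α ((k:ℕ)+1) = p + 1 - widx d A α ((k':ℕ)+1) :=
        natAbs_inj hd hA hval (abs_lt.mpr ⟨by omega, by omega⟩)
      have hww : widx d A α ((k:ℕ)+1) = widx d A α ((k':ℕ)+1) := by omega
      have hvv : ((k:ℕ)+1) = ((k':ℕ)+1) := by rw [← hs1.2, ← hs2.2, hww]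
      exact Fin.ext (by omega)
    · exfalso
      have e1 := hf1 k h1
      have e2 := hf2 k' h2
      rw [hkk, e2] at e1
      have hb1 := hA.1 (p + 1 - widx d A α ((k:ℕ)+1))
      have := k'.isLt
      omega
    · exfalso
      have e1 := hf1 k' h2
      have e2 := hf2 k h1
      rw [← hkk, e2] at e1
      have hb1 := hA.1 (p + 1 - widx d A α ((k':ℕ)+1))
      have := k.isLt
      omega
    · rw [hf2 k h1, hf2 k' h2] at hkk; exact hkk
  set σ : Equiv.Perm (Fin d) := Equiv.ofBijective f
    ((Finite.injective_iff_bijective).mp hfinj) with hσ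
  have hσapp : ∀ k, σ k = f k := fun k => rfl
  set ε : Fin d → ℝ := fun j =>
    if (j : ℕ) < d - 1 then
      -((if 0 < A (p + 1 - widx d A β ((j:ℕ)+1)) then (1:ℝ) else -1) *
        (if 0 < A (widx d A β ((j:ℕ)+1)) then (1:ℝ) else -1))
    else -1 with hε'
  have hε : ∀ j, ε j = 1 ∨ ε j = -1 := by
    intro j; simp only [hε']
    split
    · split <;> split <;> norm_num
    · right; rfl
  -- last-coordinate preservation
  have hflast : ∀ j : Fin d, ((f j : ℕ) = d - 1 ↔ (j : ℕ) = d - 1) := by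
    intro j
    by_cases hj : (j : ℕ) < d - 1
    · have e1 := hf1 j hj
      have hb := hA.1 (p + 1 - widx d A α ((j:ℕ)+1))
      constructor
      · intro hc; omega
      · intro hc; omega
    · rw [hf2 j hj]
  have hsymm_lt : ∀ j : Fin d, (j : ℕ) < d - 1 → ((σ.symm j : ℕ)) < d - 1 := by
    intro j hj
    have h1 : f (σ.symm j) = j := by rw [← hσapp, Equiv.apply_symm_apply]
    by_contra hc
    have h2 : ((σ.symm j : ℕ)) = d - 1 := by have := (σ.symm j).isLt; omega
    have := (hflast (σ.symm j)).mpr h2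
    rw [h1] at this
    omega
  have hsymm_last : ∀ j : Fin d, (j : ℕ) = d - 1 → ((σ.symm j : ℕ)) = d - 1 := by
    intro j hj
    have h1 : f (σ.symm j) = j := by rw [← hσapp, Equiv.apply_symm_apply]
    exact (hflast (σ.symm j)).mp (by rw [h1]; exact hj)
  refine ⟨spermLIE d σ ε hε, ?_, ?_, ?_, ?_⟩
  · -- grid stability of L
    intro a y hy j
    constructor
    · intro hj
      obtain ⟨m, hm⟩ := (hy (σ.symm j)).1 (hsymm_lt j hj)
      rcases hε j with h | h
      · exact ⟨m, by rw [spermLIE_apply, hm, h]; ring⟩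
      · exact ⟨-m, by rw [spermLIE_apply, hm, h]; push_cast; ring⟩
    · intro hj
      rw [spermLIE_apply, (hy (σ.symm j)).2 (hsymm_last j hj), mul_zero]
  · -- grid stability of L.symm
    intro a y hy k
    constructor
    · intro hk
      have hlt : ((σ k : ℕ)) < d - 1 := by
        have h1 := hflast k
        rw [← hσapp k] at h1
        have := (σ k).isLt
        omega
      obtain ⟨m, hm⟩ := (hy (σ k)).1 hlt
      rcases hε (σ k) with h | h
      · exact ⟨m, by rw [spermLIE_symm_apply, hm, h]; ring⟩
      · exact ⟨-m, by rw [spermLIE_symm_apply, hm, h]; push_cast; ring⟩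
    · intro hk
      have hlt : ((σ k : ℕ)) = d - 1 := by
        have h1 := (hflast k).mpr hk
        rw [← hσapp k] at h1
        exact h1
      rw [spermLIE_symm_apply, (hy (σ k)).2 hlt, mul_zero]
  · -- L (eVec d d) = - eVec d d
    have hdd : d - 1 < d := by omega
    rw [eVec, dif_pos hdd]
    have hklast : ¬(((⟨d - 1, hdd⟩ : Fin d) : ℕ) < d - 1) := by simp
    have hfix : σ (⟨d - 1, hdd⟩ : Fin d) = ⟨d - 1, hdd⟩ := by
      rw [hσapp, hf2 _ hklast]
    ext j
    rw [spermLIE_apply, PiLp.neg_apply]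
    by_cases hj : j = (⟨d - 1, hdd⟩ : Fin d)
    · subst hj
      have hsj : σ.symm (⟨d - 1, hdd⟩ : Fin d) = ⟨d - 1, hdd⟩ := by
        rw [Equiv.symm_apply_eq, hfix]
      rw [hsj, EuclideanSpace.single_apply, if_pos rfl]
      have hεlast : ε (⟨d - 1, hdd⟩ : Fin d) = -1 := by
        simp only [hε']
        rw [if_neg hklast]
      rw [hεlast]
      ring
    · have hsj : σ.symm j ≠ (⟨d - 1, hdd⟩ : Fin d) := by
        intro hc
        apply hj
        rw [← Equiv.apply_symm_apply σ j, hc, hfix]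
      rw [EuclideanSpace.single_apply, if_neg hsj, EuclideanSpace.single_apply, if_neg hj,
        mul_zero, neg_zero]
  · -- the key identity on the window
    intro i h1 h2
    have hbA := hA.1 i
    have hbA' := hA.1 (p + 1 - i)
    have hiw : widx d A α ((A i).natAbs) = i := widx_eq hd hA (by omega) (by omega)
    have hiw' : widx d A β ((A (p+1-i)).natAbs) = p + 1 - i := widx_eq hd hA (by omega) (by omega)
    have hks : (A i).natAbs - 1 < d := by omega
    have hks' : (A (p+1-i)).natAbs - 1 < d := by omega
    have hkslt : (A i).natAbs - 1 < d - 1 := by omega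
    have hks'lt : (A (p+1-i)).natAbs - 1 < d - 1 := by omega
    have hfk : f ⟨(A i).natAbs - 1, hks⟩ = ⟨(A (p+1-i)).natAbs - 1, hks'⟩ := by
      apply Fin.ext
      rw [hf1 _ (by exact hkslt)]
      show (A (p + 1 - widx d A α (((A i).natAbs - 1) + 1))).natAbs - 1 = _
      rw [show ((A i).natAbs - 1) + 1 = (A i).natAbs by omega, hiw]
    have hεk : ε ⟨(A (p+1-i)).natAbs - 1, hks'⟩ =
        -((if 0 < A i then (1:ℝ) else -1) * (if 0 < A (p+1-i) then (1:ℝ) else -1)) := by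
      simp only [hε']
      rw [if_pos (by exact hks'lt)]
      show -((if 0 < A (p + 1 - widx d A β (((A (p+1-i)).natAbs - 1) + 1)) then (1:ℝ) else -1) *
        (if 0 < A (widx d A β (((A (p+1-i)).natAbs - 1) + 1)) then (1:ℝ) else -1)) = _
      rw [show ((A (p+1-i)).natAbs - 1) + 1 = (A (p+1-i)).natAbs by omega, hiw',
        show p + 1 - (p + 1 - i) = i by ring]
    rw [engelU, engelU, eVec, eVec, dif_pos hks, dif_pos hks']
    ext j
    rw [spermLIE_apply, PiLp.neg_apply, PiLp.smul_apply, PiLp.smul_apply, smul_eq_mul,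
      smul_eq_mul]
    by_cases hj : j = (⟨(A (p+1-i)).natAbs - 1, hks'⟩ : Fin d)
    · have hsj : σ.symm j = ⟨(A i).natAbs - 1, hks⟩ := by
        rw [Equiv.symm_apply_eq, hσapp, hfk, hj]
      rw [hsj, hj, hεk, EuclideanSpace.single_apply, if_pos rfl,
        EuclideanSpace.single_apply, if_pos rfl]
      split_ifs <;> ring
    · have hsj : σ.symm j ≠ (⟨(A i).natAbs - 1, hks⟩ : Fin d) := by
        intro hc
        apply hj
        rw [← Equiv.apply_symm_apply σ j, hc, hσapp, hfk]
      rw [EuclideanSpace.single_apply, if_neg hsj, EuclideanSpace.single_apply, if_neg hj]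
      ring

end EngelAux

namespace EngelAux

lemma mem_layer_iff (d : ℕ) (A : ℤ → ℤ) (a b δ : ℝ) (m : ℤ) (x : Euc d) :
    x ∈ engelLayer d A a b δ m ↔ x - engelOffset d A b δ m ∈ engelGrid d a := by
  rw [engelLayer, Set.mem_vadd_set_iff_neg_vadd_mem, vadd_eq_add, neg_add_eq_sub]

lemma offset_mem_layer (d : ℕ) (A : ℤ → ℤ) (a b δ : ℝ) (m : ℤ) :
    engelOffset d A b δ m ∈ engelLayer d A a b δ m := by
  rw [mem_layer_iff, sub_self]
  exact grid_zero d a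

lemma step_iso (d : ℕ) (hd : 2 ≤ d) (A : ℤ → ℤ) (hA : EngelSeq d A) (a b δ : ℝ) (p : ℤ) :
    ∃ g : Euc d ≃ᵢ Euc d,
      g (engelOffset d A b δ p) = engelOffset d A b δ (p+1) ∧
      ∀ t : ℤ, -((d:ℤ)-1) ≤ t → t ≤ (d:ℤ)-1 →
        g '' engelLayer d A a b δ (p+t) = engelLayer d A a b δ (p+1-t) := by
  obtain ⟨L, hG, hG', hK2, hK1⟩ := exists_L d hd A hA p
  have hd' : (2:ℤ) ≤ (d:ℤ) := by exact_mod_cast hd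
  set w : Euc d := engelOffset d A b δ (p+1) - L (engelOffset d A b δ p) with hw
  have Cpos : ∀ n : ℕ, (n:ℤ) ≤ (d:ℤ) - 1 →
      L (engelCum d A ((p + (n:ℤ))/2)) - L (engelCum d A (p/2))
        = engelCum d A ((p + 1 - (n:ℤ))/2) - engelCum d A ((p+1)/2) := by
    intro n
    induction n with
    | zero => intro _; norm_num
    | succ k ih =>
        intro hk
        have hk' : ((k:ℤ)) ≤ (d:ℤ) - 1 := by push_cast at hk ⊢; omega
        have ihh := ih hk'
        push_cast at hk ⊢
        rcases Int.even_or_odd (p + k + 1) with ⟨r, hr⟩ | ⟨r, hr⟩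
        · have e1 : (p + ((k:ℤ)+1))/2 = r := by omega
          have e2 : (p + (k:ℤ))/2 = r - 1 := by omega
          have e3 : (p + 1 - ((k:ℤ)+1))/2 = r - (k:ℤ) - 1 := by omega
          have e4 : (p + 1 - (k:ℤ))/2 = r - (k:ℤ) := by omega
          rw [e1, e3]
          rw [e2, e4] at ihh
          have hcum1 : engelCum d A r = engelCum d A (r - 1) + engelU d A r := by
            have h := engelCum_succ d A (r - 1)
            rw [show r - 1 + 1 = r by ring] at h
            exact h
          have hcum2 : engelCum d A (r - (k:ℤ)) =
              engelCum d A (r - (k:ℤ) - 1) + engelU d A (r - (k:ℤ)) := by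
            have h := engelCum_succ d A (r - (k:ℤ) - 1)
            rw [show r - (k:ℤ) - 1 + 1 = r - (k:ℤ) by ring] at h
            exact h
          have hu : L (engelU d A r) = -(engelU d A (p + 1 - r)) :=
            hK1 r (by omega) (by omega)
          rw [show p + 1 - r = r - (k:ℤ) by omega] at hu
          calc L (engelCum d A r) - L (engelCum d A (p/2))
              = (L (engelCum d A (r-1)) - L (engelCum d A (p/2))) + L (engelU d A r) := by
                rw [hcum1, map_add]; abel
            _ = (engelCum d A (r - (k:ℤ)) - engelCum d A ((p+1)/2))
                  + -(engelU d A (r - (k:ℤ))) := by rw [ihh, hu]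
            _ = engelCum d A (r - (k:ℤ) - 1) - engelCum d A ((p+1)/2) := by
                rw [hcum2]; abel
        · have e1 : (p + ((k:ℤ)+1))/2 = (p + (k:ℤ))/2 := by omega
          have e3 : (p + 1 - ((k:ℤ)+1))/2 = (p + 1 - (k:ℤ))/2 := by omega
          rw [e1, e3]
          exact ihh
  have Cneg : ∀ n : ℕ, (n:ℤ) ≤ (d:ℤ) - 1 →
      L (engelCum d A ((p - (n:ℤ))/2)) - L (engelCum d A (p/2))
        = engelCum d A ((p + 1 + (n:ℤ))/2) - engelCum d A ((p+1)/2) := by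
    intro n
    induction n with
    | zero => intro _; norm_num
    | succ k ih =>
        intro hk
        have hk' : ((k:ℤ)) ≤ (d:ℤ) - 1 := by push_cast at hk ⊢; omega
        have ihh := ih hk'
        push_cast at hk ⊢
        rcases Int.even_or_odd (p - k) with ⟨r, hr⟩ | ⟨r, hr⟩
        · have e1 : (p - ((k:ℤ)+1))/2 = r - 1 := by omega
          have e2 : (p - (k:ℤ))/2 = r := by omega
          have e3 : (p + 1 + ((k:ℤ)+1))/2 = r + (k:ℤ) + 1 := by omega
          have e4 : (p + 1 + (k:ℤ))/2 = r + (k:ℤ) := by omega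
          rw [e1, e3]
          rw [e2, e4] at ihh
          have hcum1 : engelCum d A r = engelCum d A (r - 1) + engelU d A r := by
            have h := engelCum_succ d A (r - 1)
            rw [show r - 1 + 1 = r by ring] at h
            exact h
          have hcum2 : engelCum d A (r + (k:ℤ) + 1) =
              engelCum d A (r + (k:ℤ)) + engelU d A (r + (k:ℤ) + 1) := by
            exact engelCum_succ d A (r + (k:ℤ))
          have hu : L (engelU d A r) = -(engelU d A (p + 1 - r)) :=
            hK1 r (by omega) (by omega)
          rw [show p + 1 - r = r + (k:ℤ) + 1 by omega] at hu
          calc L (engelCum d A (r - 1)) - L (engelCum d A (p/2))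
              = (L (engelCum d A r) - L (engelCum d A (p/2))) - L (engelU d A r) := by
                rw [hcum1, map_add]; abel
            _ = (engelCum d A (r + (k:ℤ)) - engelCum d A ((p+1)/2))
                  - -(engelU d A (r + (k:ℤ) + 1)) := by rw [ihh, hu]
            _ = engelCum d A (r + (k:ℤ) + 1) - engelCum d A ((p+1)/2) := by
                rw [hcum2]; abel
        · have e1 : (p - ((k:ℤ)+1))/2 = (p - (k:ℤ))/2 := by omega
          have e3 : (p + 1 + ((k:ℤ)+1))/2 = (p + 1 + (k:ℤ))/2 := by omega
          rw [e1, e3]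
          exact ihh
  have C : ∀ t : ℤ, -((d:ℤ)-1) ≤ t → t ≤ (d:ℤ)-1 →
      L (engelCum d A ((p + t)/2)) - L (engelCum d A (p/2))
        = engelCum d A ((p + 1 - t)/2) - engelCum d A ((p+1)/2) := by
    intro t h1 h2
    rcases le_or_gt 0 t with ht | ht
    · have h := Cpos t.toNat (by omega)
      rw [Int.toNat_of_nonneg ht] at h
      exact h
    · have h := Cneg (-t).toNat (by omega)
      have htt : (((-t).toNat : ℕ) : ℤ) = -t := Int.toNat_of_nonneg (by omega)
      rw [htt, show p - -t = p + t by ring, show p + 1 + -t = p + 1 - t by ring] at h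
      exact h
  have hkey : ∀ t : ℤ, -((d:ℤ)-1) ≤ t → t ≤ (d:ℤ)-1 →
      L (engelOffset d A b δ (p + t)) + w = engelOffset d A b δ (p + 1 - t) := by
    intro t h1 h2
    have hC := C t h1 h2
    have hC' : L (engelCum d A ((p + t)/2)) =
        L (engelCum d A (p/2)) + engelCum d A ((p + 1 - t)/2) - engelCum d A ((p+1)/2) := by
      calc L (engelCum d A ((p + t)/2))
          = (L (engelCum d A ((p + t)/2)) - L (engelCum d A (p/2)))
              + L (engelCum d A (p/2)) := by abel
        _ = _ := by rw [hC]; abel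
    rw [hw]
    simp only [engelOffset, map_add, map_smul, hK2, hC']
    push_cast
    module
  refine ⟨{ toFun := fun x => L x + w
            invFun := fun y => L.symm (y - w)
            left_inv := by
              intro x
              show L.symm (L x + w - w) = x
              rw [show L x + w - w = L x by abel]
              exact L.symm_apply_apply x
            right_inv := by
              intro y
              show L (L.symm (y - w)) + w = y
              rw [L.apply_symm_apply]
              abel
            isometry_toFun := Isometry.of_dist_eq (by
              intro x y
              have h : (L x + w) - (L y + w) = L (x - y) := by rw [map_sub]; abel
              rw [dist_eq_norm, dist_eq_norm, h]
              exact L.norm_map _) }, ?_, ?_⟩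
  · show L (engelOffset d A b δ p) + w = engelOffset d A b δ (p+1)
    rw [hw]; abel
  · intro t h1 h2
    have hk := hkey t h1 h2
    ext z
    constructor
    · rintro ⟨x, hx, rfl⟩
      show L x + w ∈ engelLayer d A a b δ (p + 1 - t)
      rw [mem_layer_iff] at hx ⊢
      rw [← hk]
      have h3 : L x + w - (L (engelOffset d A b δ (p + t)) + w)
          = L (x - engelOffset d A b δ (p + t)) := by rw [map_sub]; abel
      rw [h3]
      exact hG a _ hx
    · intro hz
      refine ⟨L.symm (z - w), ?_, ?_⟩
      · rw [mem_layer_iff] at hz ⊢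
        have ho : engelOffset d A b δ (p + t) = L.symm (engelOffset d A b δ (p + 1 - t) - w) := by
          rw [← hk, show L (engelOffset d A b δ (p + t)) + w - w
            = L (engelOffset d A b δ (p + t)) by abel, L.symm_apply_apply]
        rw [ho, ← map_sub]
        have h4 : z - w - (engelOffset d A b δ (p + 1 - t) - w)
            = z - engelOffset d A b δ (p + 1 - t) := by abel
        rw [h4]
        exact hG' a _ hz
      · show L (L.symm (z - w)) + w = z
        rw [L.apply_symm_apply]
        abel

end EngelAux

namespace EngelAux

def transIso (d : ℕ) (v : Euc d) : Euc d ≃ᵢ Euc d where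
  toFun := fun x => x + v
  invFun := fun y => y - v
  left_inv := fun x => by show x + v - v = x; abel
  right_inv := fun y => by show y - v + v = y; abel
  isometry_toFun := Isometry.of_dist_eq (fun x y => by
    have h : (x + v) - (y + v) = x - y := by abel
    rw [dist_eq_norm, dist_eq_norm, h])

lemma ce_refl {V : Type*} [MetricSpace V] (X : Set V) (x : V) (ρ : ℝ) :
    ClustersEquiv X x x ρ :=
  ⟨IsometryEquiv.refl V, rfl, by rw [show ⇑(IsometryEquiv.refl V) = id from rfl, Set.image_id]⟩

lemma ce_symm {V : Type*} [MetricSpace V] {X : Set V} {x x' : V} {ρ : ℝ}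
    (h : ClustersEquiv X x x' ρ) : ClustersEquiv X x' x ρ := by
  obtain ⟨g, h1, h2⟩ := h
  refine ⟨g.symm, by rw [← h1, IsometryEquiv.symm_apply_apply], ?_⟩
  rw [← h2, ← Set.image_comp]
  simp

lemma ce_trans {V : Type*} [MetricSpace V] {X : Set V} {x x' x'' : V} {ρ : ℝ}
    (h : ClustersEquiv X x x' ρ) (h' : ClustersEquiv X x' x'' ρ) :
    ClustersEquiv X x x'' ρ := by
  obtain ⟨g, h1, h2⟩ := h
  obtain ⟨g', h1', h2'⟩ := h'
  refine ⟨g.trans g', ?_, ?_⟩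
  · show g' (g x) = x''
    rw [h1, h1']
  · show (fun y => g' (g y)) '' cluster X x ρ = cluster X x'' ρ
    rw [← h2', ← h2, ← Set.image_comp]
    rfl

lemma cluster_image {V : Type*} [MetricSpace V] (g : V ≃ᵢ V) (X : Set V) (x : V) (ρ : ℝ) :
    g '' cluster X x ρ = (g '' X) ∩ Metric.closedBall (g x) ρ := by
  rw [cluster, Set.image_inter g.injective, g.image_closedBall]

lemma trans_equiv (d : ℕ) (A : ℤ → ℤ) (a b δ ρ : ℝ) {m : ℤ} {x x' : Euc d}
    (hx : x ∈ engelLayer d A a b δ m) (hx' : x' ∈ engelLayer d A a b δ m) :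
    ClustersEquiv (engelSet d A a b δ) x x' ρ := by
  rw [mem_layer_iff] at hx hx'
  have hvg : x' - x ∈ engelGrid d a := by
    have h : x' - x = (x' - engelOffset d A b δ m) + -(x - engelOffset d A b δ m) := by abel
    rw [h]
    exact grid_add hx' (grid_neg hx)
  have hgX : (transIso d (x' - x)) '' engelSet d A a b δ = engelSet d A a b δ := by
    have hlayer : ∀ q : ℤ, (transIso d (x' - x)) '' engelLayer d A a b δ q
        = engelLayer d A a b δ q := by
      intro q
      ext z
      constructor
      · rintro ⟨y, hy, rfl⟩
        show y + (x' - x) ∈ engelLayer d A a b δ q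
        rw [mem_layer_iff] at hy ⊢
        have h : y + (x' - x) - engelOffset d A b δ q
            = (y - engelOffset d A b δ q) + (x' - x) := by abel
        rw [h]
        exact grid_add hy hvg
      · intro hz
        refine ⟨z - (x' - x), ?_, ?_⟩
        · rw [mem_layer_iff] at hz ⊢
          have h : z - (x' - x) - engelOffset d A b δ q
              = (z - engelOffset d A b δ q) + -(x' - x) := by abel
          rw [h]
          exact grid_add hz (grid_neg hvg)
        · show z - (x' - x) + (x' - x) = z
          abel
    rw [engelSet, Set.image_iUnion]
    exact Set.iUnion_congr hlayer
  refine ⟨transIso d (x' - x), ?_, ?_⟩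
  · show x + (x' - x) = x'
    abel
  · rw [cluster_image, hgX]
    have h : (transIso d (x' - x)) x = x' := by show x + (x' - x) = x'; abel
    rw [h, cluster]

lemma step_equiv (d : ℕ) (hd : 2 ≤ d) (A : ℤ → ℤ) (hA : EngelSeq d A) (a b δ ρ : ℝ)
    (hloc : ∀ (p : ℤ) (x : Euc d), x ∈ engelLayer d A a b δ p →
      cluster (engelSet d A a b δ) x ρ ⊆
        ⋃ l ∈ Set.Icc (p - ((d : ℤ) - 1)) (p + ((d : ℤ) - 1)), engelLayer d A a b δ l)
    (p : ℤ) :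
    ClustersEquiv (engelSet d A a b δ) (engelOffset d A b δ p)
      (engelOffset d A b δ (p+1)) ρ := by
  obtain ⟨g, hg0, hg⟩ := step_iso d hd A hA a b δ p
  have hd' : (2:ℤ) ≤ (d:ℤ) := by exact_mod_cast hd
  refine ⟨g, hg0, ?_⟩
  have hcl : ∀ q : ℤ, cluster (engelSet d A a b δ) (engelOffset d A b δ q) ρ =
      (⋃ l ∈ Set.Icc (q - ((d:ℤ)-1)) (q + ((d:ℤ)-1)), engelLayer d A a b δ l)
        ∩ Metric.closedBall (engelOffset d A b δ q) ρ := by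
    intro q
    apply Set.Subset.antisymm
    · intro z hz
      exact ⟨hloc q _ (offset_mem_layer d A a b δ q) hz, hz.2⟩
    · rintro z ⟨hz1, hz2⟩
      refine ⟨?_, hz2⟩
      simp only [Set.mem_iUnion] at hz1
      obtain ⟨l, _, hl⟩ := hz1
      show z ∈ engelSet d A a b δ
      rw [engelSet]
      exact Set.mem_iUnion.mpr ⟨l, hl⟩
  rw [hcl p, hcl (p+1), Set.image_inter g.injective, g.image_closedBall, hg0]
  congr 1
  ext z
  simp only [Set.mem_image, Set.mem_iUnion, Set.mem_Icc, exists_prop]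
  constructor
  · rintro ⟨x, ⟨l, ⟨hl1, hl2⟩, hx⟩, rfl⟩
    refine ⟨p + 1 - (l - p), ⟨by omega, by omega⟩, ?_⟩
    have himg := hg (l - p) (by omega) (by omega)
    rw [show p + (l - p) = l by ring] at himg
    rw [← himg]
    exact ⟨x, hx, rfl⟩
  · rintro ⟨l', ⟨hl1, hl2⟩, hz⟩
    have himg := hg (p + 1 - l') (by omega) (by omega)
    rw [show p + 1 - (p + 1 - l') = l' by ring] at himg
    rw [← himg] at hz
    obtain ⟨x, hx, hgx⟩ := hz
    exact ⟨x, ⟨p + (p + 1 - l'), ⟨by omega, by omega⟩, hx⟩, hgx⟩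

end EngelAux

open EngelAux

/-- Lemma 5.1: if every `ρ`-cluster of an Engel set centered in layer `X_p`
contains only points of the layers `X_l` with `|l - p| ≤ d-1`, then all `ρ`-clusters are
mutually equivalent, i.e. `N_X(ρ) = 1`. -/
theorem engelSet_clusters_equiv_of_local (d : ℕ) (hd : 2 ≤ d) (A : ℤ → ℤ)
    (hA : EngelSeq d A) (a b δ : ℝ) (ha : 0 < a) (hab : a < b) (hδ : 0 < δ)
    (ρ : ℝ) (hρ : 0 < ρ)
    (hloc : ∀ (p : ℤ) (x : Euc d), x ∈ engelLayer d A a b δ p →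
      cluster (engelSet d A a b δ) x ρ ⊆
        ⋃ l ∈ Set.Icc (p - ((d : ℤ) - 1)) (p + ((d : ℤ) - 1)), engelLayer d A a b δ l) :
    ∀ x ∈ engelSet d A a b δ, ∀ x' ∈ engelSet d A a b δ,
      ClustersEquiv (engelSet d A a b δ) x x' ρ := by
  have hstep : ∀ p : ℤ, ClustersEquiv (engelSet d A a b δ) (engelOffset d A b δ p)
      (engelOffset d A b δ (p+1)) ρ := step_equiv d hd A hA a b δ ρ hloc
  have hfwd : ∀ (n : ℕ) (p : ℤ), ClustersEquiv (engelSet d A a b δ)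
      (engelOffset d A b δ p) (engelOffset d A b δ (p + (n:ℤ))) ρ := by
    intro n
    induction n with
    | zero =>
        intro p
        rw [show p + ((0:ℕ):ℤ) = p by norm_num]
        exact ce_refl _ _ _
    | succ k ih =>
        intro p
        have h2 := hstep (p + (k:ℤ))
        rw [show (p + (((k+1):ℕ):ℤ)) = (p + (k:ℤ)) + 1 by push_cast; ring]
        exact ce_trans (ih p) h2
  have hchain : ∀ p q : ℤ, ClustersEquiv (engelSet d A a b δ)
      (engelOffset d A b δ p) (engelOffset d A b δ q) ρ := by
    intro p q
    rcases le_total p q with h | h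
    · have h1 := hfwd (q - p).toNat p
      rw [show p + (((q-p).toNat : ℕ) : ℤ) = q by omega] at h1
      exact h1
    · have h1 := hfwd (p - q).toNat q
      rw [show q + (((p-q).toNat : ℕ) : ℤ) = p by omega] at h1
      exact ce_symm h1
  intro x hx x' hx'
  rw [engelSet, Set.mem_iUnion] at hx hx'
  obtain ⟨m, hm⟩ := hx
  obtain ⟨m', hm'⟩ := hx'
  exact ce_trans (trans_equiv d A a b δ ρ hm (offset_mem_layer d A a b δ m))
    (ce_trans (hchain m m')
      (trans_equiv d A a b δ ρ (offset_mem_layer d A a b δ m') hm'))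
end
end
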